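/- arXiv:1604.03711 — 3 statements merged into one kernel-verified Lean document; each statement's English description precedes it below -/
import Mathlib

section
/- Let μ be a measure of n-polynomial growth on ℝ^d and let B₁ ⊂ B₂ be balls with B₁ ⊂ B₂. Define K_{B₁,B₂} = 1 + Σ_{j=0}^{N} μ(2^j B₁)/r(2^j B₁)^n, where N is the smallest positive integer ℓ with B₂ ⊂ 2^ℓ B₁. Then K_{B₁,B₂} is comparable (with constants depending only on n and d) to 1 + ∫_{r(B₁) ≤ |y − x_{B₁}| ≤ r(B₂)} |y − x_{B₁}|^{-n} dμ(y), where x_{B₁} is the center of B₁ and r(B) denotes the radius of B. -/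
open MeasureTheory Metric Set
open scoped ENNReal

private lemma dyadic_mem {r t : ℝ} (_hr : 0 < r) :
    ∀ m : ℕ, r ≤ t → t < 2 ^ m * r → ∃ j, j < m ∧ 2 ^ j * r ≤ t ∧ t < 2 ^ (j + 1) * r := by
  intro m
  induction m with
  | zero => intro h1 h2; norm_num at h2; linarith
  | succ m ih =>
    intro h1 h2
    by_cases hc : t < 2 ^ m * r
    · obtain ⟨j, hj, h3, h4⟩ := ih h1 hc
      exact ⟨j, Nat.lt_succ_of_lt hj, h3, h4⟩
    · exact ⟨m, Nat.lt_succ_self m, le_of_not_gt hc, h2⟩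

private lemma sum_lintegral_le {α : Type*} [MeasurableSpace α] (μ : Measure α)
    (f : α → ℝ≥0∞) (s : Finset ℕ) (D : ℕ → Set α) (ann : Set α)
    (hm : ∀ i, MeasurableSet (D i))
    (hd : ∀ i j, i ≠ j → Disjoint (D i) (D j))
    (hsub : ∀ i ∈ s, D i ⊆ ann) :
    ∑ i ∈ s, ∫⁻ y in D i, f y ∂μ ≤ ∫⁻ y in ann, f y ∂μ := by
  classical
  set A : ℕ → Set α := fun i => if i ∈ s then D i else ∅ with hA
  have h1 : ∑ i ∈ s, ∫⁻ y in D i, f y ∂μ = ∑ i ∈ s, ∫⁻ y in A i, f y ∂μ :=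
    Finset.sum_congr rfl fun i hi => by rw [hA]; simp [hi]
  rw [h1]
  refine le_trans (ENNReal.sum_le_tsum s) ?_
  have hmA : ∀ i, MeasurableSet (A i) := by
    intro i; by_cases hi : i ∈ s <;> simp [hA, hi, hm i]
  have hdA : Pairwise (Function.onFun Disjoint A) := by
    intro i j hij
    simp only [Function.onFun, hA]
    by_cases hi : i ∈ s <;> by_cases hj : j ∈ s <;> simp [hi, hj, hd i j hij]
  rw [← lintegral_iUnion hmA hdA f]
  refine lintegral_mono_set (iUnion_subset fun i => ?_)
  by_cases hi : i ∈ s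
  · simpa [hA, hi] using hsub i hi
  · simp [hA, hi]

private lemma lintegral_biUnion_le {α : Type*} [MeasurableSpace α] (μ : Measure α)
    (f : α → ℝ≥0∞) (s : Finset ℕ) (D : ℕ → Set α) :
    ∫⁻ y in ⋃ i ∈ s, D i, f y ∂μ ≤ ∑ i ∈ s, ∫⁻ y in D i, f y ∂μ := by
  classical
  induction s using Finset.induction_on with
  | empty => simp
  | @insert a s ha ih =>
    rw [Finset.set_biUnion_insert, Finset.sum_insert ha]
    exact le_trans (lintegral_union_le _ _ _) (add_le_add le_rfl ih)

private lemma ratio_aux {n r₁ : ℝ} (hr₁ : 0 < r₁) (a k : ℕ) :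
    ENNReal.ofReal (((2:ℝ) ^ a * r₁) ^ n)
      = ENNReal.ofReal ((2:ℝ) ^ (-n)) ^ k * ENNReal.ofReal (((2:ℝ) ^ (a + k) * r₁) ^ n) := by
  rw [← ENNReal.ofReal_pow (by positivity), ← ENNReal.ofReal_mul (by positivity)]
  congr 1
  have h1 : (2:ℝ) ^ (a + k) * r₁ = 2 ^ k * (2 ^ a * r₁) := by rw [pow_add]; ring
  rw [h1, Real.mul_rpow (x := (2:ℝ) ^ k) (by positivity) (by positivity),
    ← Real.rpow_natCast ((2:ℝ) ^ (-n)) k, ← Real.rpow_mul (by norm_num : (0:ℝ) ≤ 2),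
    ← Real.rpow_natCast (2:ℝ) k, ← Real.rpow_mul (by norm_num : (0:ℝ) ≤ 2),
    ← mul_assoc, ← Real.rpow_add (by norm_num : (0:ℝ) < 2)]
  have h2 : -n * (k:ℝ) + (k:ℝ) * n = 0 := by ring
  rw [h2, Real.rpow_zero, one_mul]

private lemma cancel_aux {n r₁ : ℝ} (hr₁ : 0 < r₁) (a : ℕ) :
    ((2:ℝ) ^ a * r₁) ^ (-n) * ((2:ℝ) ^ (a+1) * r₁) ^ n = (2:ℝ) ^ n := by
  have h2r : (0:ℝ) < 2 ^ a * r₁ := by positivity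
  rw [Real.rpow_neg h2r.le]
  have h1 : (2:ℝ) ^ (a+1) * r₁ = 2 * (2 ^ a * r₁) := by rw [pow_succ]; ring
  rw [h1, Real.mul_rpow (x := (2:ℝ)) (by norm_num) h2r.le]
  have h2 : ((2:ℝ) ^ a * r₁) ^ n ≠ 0 := ne_of_gt (Real.rpow_pos_of_pos h2r n)
  field_simp

/-- For nested balls `B₁ ⊆ B₂` and a measure of `n`-polynomial growth,
the Tolsa coefficient `K_{B₁,B₂} = 1 + Σ_{j=0}^N μ(2^j B₁)/r(2^j B₁)^n` is comparable,
with constants depending only on `n` and `d`, to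
`1 + ∫_{r(B₁) ≤ |y - x_{B₁}| ≤ r(B₂)} |y - x_{B₁}|^{-n} dμ(y)`. -/
theorem statement4 (d : ℕ) (n : ℝ) (hn : 0 < n) :
    ∃ c C : ℝ≥0∞, 0 < c ∧ C ≠ ⊤ ∧
      ∀ (μ : Measure (EuclideanSpace ℝ (Fin d)))
        (_hgrowth : ∀ (z : EuclideanSpace ℝ (Fin d)) (ρ : ℝ), 0 < ρ →
          μ (ball z ρ) ≤ ENNReal.ofReal (ρ ^ n))
        (x₁ x₂ : EuclideanSpace ℝ (Fin d)) (r₁ r₂ : ℝ)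
        (_hr₁ : 0 < r₁) (_hr₂ : 0 < r₂)
        (_hsub : ball x₁ r₁ ⊆ ball x₂ r₂)
        (N : ℕ) (_hNpos : 0 < N)
        (_hN : ball x₂ r₂ ⊆ ball x₁ (2 ^ N * r₁))
        (_hNleast : ∀ ℓ : ℕ, 0 < ℓ → ℓ < N → ¬ ball x₂ r₂ ⊆ ball x₁ (2 ^ ℓ * r₁)),
        c * (1 + ∫⁻ y in {y | r₁ ≤ dist y x₁ ∧ dist y x₁ ≤ r₂},
              ENNReal.ofReal (dist y x₁ ^ (-n)) ∂μ) ≤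
          1 + ∑ j ∈ Finset.range (N + 1),
              μ (ball x₁ (2 ^ j * r₁)) / ENNReal.ofReal ((2 ^ j * r₁) ^ n) ∧
        1 + ∑ j ∈ Finset.range (N + 1),
              μ (ball x₁ (2 ^ j * r₁)) / ENNReal.ofReal ((2 ^ j * r₁) ^ n) ≤
          C * (1 + ∫⁻ y in {y | r₁ ≤ dist y x₁ ∧ dist y x₁ ≤ r₂},
              ENNReal.ofReal (dist y x₁ ^ (-n)) ∂μ) := by
  classical
  set q : ℝ≥0∞ := ENNReal.ofReal ((2:ℝ) ^ (-n)) with hq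
  have hq1 : q < 1 := by
    rw [hq, ← ENNReal.ofReal_one]
    exact (ENNReal.ofReal_lt_ofReal_iff one_pos).mpr
      (Real.rpow_lt_one_of_one_lt_of_neg one_lt_two (neg_lt_zero.mpr hn))
  set G : ℝ≥0∞ := (1 - q)⁻¹ with hG
  set K : ℝ≥0∞ := ENNReal.ofReal ((2:ℝ) ^ n) with hK
  have hGt : G ≠ ⊤ := by
    rw [hG, Ne, ENNReal.inv_eq_top, tsub_eq_zero_iff_le]
    exact not_le.mpr hq1
  have hKt : K ≠ ⊤ := ENNReal.ofReal_ne_top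
  have h1K : (1 : ℝ≥0∞) + K ≠ ⊤ := ENNReal.add_ne_top.mpr ⟨ENNReal.one_ne_top, hKt⟩
  have h1K0 : (1 : ℝ≥0∞) + K ≠ 0 := by
    intro h
    rw [add_eq_zero] at h
    exact one_ne_zero h.1
  refine ⟨(1 + K)⁻¹, 5 + G, ENNReal.inv_pos.mpr h1K,
    ENNReal.add_ne_top.mpr ⟨by norm_num, hGt⟩, ?_⟩
  intro μ hgrowth x₁ x₂ r₁ r₂ hr₁ hr₂ hsub N hNpos hN hNleast
  have h2r : ∀ j : ℕ, (0:ℝ) < 2 ^ j * r₁ := fun j => by positivity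
  set I := ∫⁻ y in {y | r₁ ≤ dist y x₁ ∧ dist y x₁ ≤ r₂},
      ENNReal.ofReal (dist y x₁ ^ (-n)) ∂μ with hI
  set S := ∑ j ∈ Finset.range (N + 1),
      μ (ball x₁ (2 ^ j * r₁)) / ENNReal.ofReal ((2 ^ j * r₁) ^ n) with hS
  set pw : ℕ → ℝ≥0∞ := fun j => ENNReal.ofReal ((2 ^ j * r₁) ^ n) with hpw
  set f : EuclideanSpace ℝ (Fin d) → ℝ≥0∞ :=
    fun y => ENNReal.ofReal (dist y x₁ ^ (-n)) with hf
  set D : ℕ → Set (EuclideanSpace ℝ (Fin d)) :=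
    fun i => ball x₁ (2 ^ (i+1) * r₁) \ ball x₁ (2 ^ i * r₁) with hD
  have hSpw : S = ∑ j ∈ Finset.range (N + 1), μ (ball x₁ (2 ^ j * r₁)) / pw j := hS
  have hpw0 : ∀ j, pw j ≠ 0 := fun j =>
    (ENNReal.ofReal_pos.mpr (Real.rpow_pos_of_pos (h2r j) n)).ne'
  have hpwt : ∀ j, pw j ≠ ⊤ := fun _ => ENNReal.ofReal_ne_top
  have hratio : ∀ a k : ℕ, pw a = q ^ k * pw (a + k) := by
    intro a k
    simp only [hpw, hq]
    exact ratio_aux hr₁ a k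
  have hreal : ∀ a : ℕ, ((2:ℝ) ^ a * r₁) ^ (-n) * ((2:ℝ) ^ (a+1) * r₁) ^ n = (2:ℝ) ^ n :=
    fun a => cancel_aux hr₁ a
  have hinv : ∀ a : ℕ, ENNReal.ofReal (((2:ℝ) ^ a * r₁) ^ (-n)) = (pw a)⁻¹ := by
    intro a
    simp only [hpw]
    rw [Real.rpow_neg (h2r a).le,
      ENNReal.ofReal_inv_of_pos (Real.rpow_pos_of_pos (h2r a) n)]
  have hDm : ∀ i, MeasurableSet (D i) := by
    intro i; simp only [hD]; exact measurableSet_ball.diff measurableSet_ball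
  have hDmem : ∀ i : ℕ, ∀ y, y ∈ D i ↔
      dist y x₁ < 2 ^ (i+1) * r₁ ∧ 2 ^ i * r₁ ≤ dist y x₁ := by
    intro i y
    simp only [hD, Set.mem_diff, mem_ball, not_lt]
  have hDd : ∀ i j : ℕ, i ≠ j → Disjoint (D i) (D j) := by
    have key : ∀ i j : ℕ, i < j → Disjoint (D i) (D j) := by
      intro i j hij
      rw [Set.disjoint_left]
      intro y hyi hyj
      have h1 := ((hDmem i y).mp hyi).1
      have h2 := ((hDmem j y).mp hyj).2
      have hpow : (2:ℝ) ^ (i+1) ≤ 2 ^ j := pow_le_pow_right₀ one_le_two hij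
      nlinarith
    intro i j hij
    rcases hij.lt_or_gt with h | h
    · exact key i j h
    · exact (key j i h).symm
  have hfm : Measurable f := by simp only [hf]; fun_prop
  have hμpw : ∀ j : ℕ, μ (ball x₁ (2 ^ j * r₁)) ≤ pw j := by
    intro j; simp only [hpw]; exact hgrowth x₁ _ (h2r j)
  have hT1 : ∀ j : ℕ, μ (ball x₁ (2 ^ j * r₁)) / pw j ≤ 1 := fun j =>
    (ENNReal.div_le_iff (hpw0 j) (hpwt j)).mpr (by simpa using hμpw j)
  -- the "upper" direction : S ≤ 4 + G + G * I
  have hx₁ : dist x₂ x₁ < r₂ := by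
    have h := hsub (mem_ball_self hr₁)
    rw [mem_ball] at h
    rw [dist_comm]; exact h
  have hB : ∀ m : ℕ, m + 2 ≤ N → 2 ^ m * r₁ < r₂ := by
    intro m hm
    obtain ⟨z, hz1, hz2⟩ := Set.not_subset.mp (hNleast (N-1) (by omega) (by omega))
    have hz3 : 2 ^ (N-1) * r₁ ≤ dist z x₁ := by
      rw [mem_ball, not_lt] at hz2; exact hz2
    have hz4 : dist z x₁ < 2 * r₂ := by
      calc dist z x₁ ≤ dist z x₂ + dist x₂ x₁ := dist_triangle _ _ _
        _ < r₂ + r₂ := add_lt_add (mem_ball.mp hz1) hx₁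
        _ = 2 * r₂ := by ring
    have hpow : (2:ℝ) ^ (m+1) ≤ 2 ^ (N-1) := pow_le_pow_right₀ one_le_two (by omega)
    have h5 : (2:ℝ) ^ (m+1) * r₁ < 2 * r₂ :=
      lt_of_le_of_lt (mul_le_mul_of_nonneg_right hpow hr₁.le) (lt_of_le_of_lt hz3 hz4)
    rw [pow_succ] at h5; linarith
  have hDann : ∀ i : ℕ, i + 4 ≤ N →
      D i ⊆ {y | r₁ ≤ dist y x₁ ∧ dist y x₁ ≤ r₂} := by
    intro i hi y hy
    obtain ⟨hy1, hy2⟩ := (hDmem i y).mp hy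
    have hp : (1:ℝ) ≤ 2 ^ i := one_le_pow₀ one_le_two
    constructor
    · nlinarith
    · have h2 : (2:ℝ) ^ (i+1) * r₁ < r₂ := hB (i+1) (by omega)
      linarith
  have hg : ∀ i : ℕ, μ (D i) ≤ pw (i+1) * ∫⁻ y in D i, f y ∂μ := by
    intro i
    have hb : ∀ y ∈ D i, ENNReal.ofReal (((2:ℝ) ^ (i+1) * r₁) ^ (-n)) ≤ f y := by
      intro y hy
      obtain ⟨hy1, hy2⟩ := (hDmem i y).mp hy
      simp only [hf]
      apply ENNReal.ofReal_le_ofReal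
      apply Real.rpow_le_rpow_of_nonpos
      · linarith [h2r i]
      · exact hy1.le
      · exact neg_nonpos.mpr hn.le
    have h1 : ENNReal.ofReal (((2:ℝ) ^ (i+1) * r₁) ^ (-n)) * μ (D i)
        ≤ ∫⁻ y in D i, f y ∂μ := by
      rw [← setLIntegral_const]
      exact setLIntegral_mono hfm hb
    rw [hinv (i+1)] at h1
    calc μ (D i) = pw (i+1) * ((pw (i+1))⁻¹ * μ (D i)) := by
          rw [← mul_assoc, ENNReal.mul_inv_cancel (hpw0 _) (hpwt _), one_mul]
      _ ≤ pw (i+1) * ∫⁻ y in D i, f y ∂μ := mul_le_mul_right h1 _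
  have hTj : ∀ j : ℕ, μ (ball x₁ (2 ^ j * r₁)) / pw j
      ≤ q ^ j + ∑ i ∈ Finset.range j, q ^ (j - (i+1)) * ∫⁻ y in D i, f y ∂μ := by
    intro j
    rw [ENNReal.div_le_iff (hpw0 j) (hpwt j), add_mul, Finset.sum_mul]
    have hc : ball x₁ (2 ^ j * r₁) ⊆ ball x₁ r₁ ∪ ⋃ i ∈ Finset.range j, D i := by
      intro y hy
      rw [mem_ball] at hy
      by_cases hyr : dist y x₁ < r₁
      · exact Or.inl (mem_ball.mpr hyr)
      · obtain ⟨i, hij, h3, h4⟩ := dyadic_mem hr₁ j (not_lt.mp hyr) hy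
        refine Or.inr (mem_iUnion₂.mpr ⟨i, Finset.mem_range.mpr hij, ?_⟩)
        exact (hDmem i y).mpr ⟨h4, h3⟩
    have h0 : μ (ball x₁ r₁) ≤ pw 0 := by
      have h := hμpw 0
      have e : (2:ℝ) ^ (0:ℕ) * r₁ = r₁ := by norm_num
      rwa [e] at h
    calc μ (ball x₁ (2 ^ j * r₁)) ≤ μ (ball x₁ r₁) + μ (⋃ i ∈ Finset.range j, D i) :=
          le_trans (measure_mono hc) (measure_union_le _ _)
      _ ≤ μ (ball x₁ r₁) + ∑ i ∈ Finset.range j, μ (D i) :=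
          add_le_add le_rfl (measure_biUnion_finset_le _ _)
      _ ≤ q ^ j * pw j + ∑ i ∈ Finset.range j,
            q ^ (j - (i+1)) * (∫⁻ y in D i, f y ∂μ) * pw j := by
          refine add_le_add ?_ (Finset.sum_le_sum fun i hi => ?_)
          · calc μ (ball x₁ r₁) ≤ pw 0 := h0
              _ = q ^ j * pw (0 + j) := hratio 0 j
              _ = q ^ j * pw j := by rw [Nat.zero_add]
          · have hij : i + 1 ≤ j := Finset.mem_range.mp hi
            have hco : (i + 1) + (j - (i + 1)) = j := by omega
            calc μ (D i) ≤ pw (i+1) * ∫⁻ y in D i, f y ∂μ := hg i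
              _ = q ^ (j - (i+1)) * pw j * ∫⁻ y in D i, f y ∂μ := by
                  rw [hratio (i+1) (j - (i+1)), hco]
              _ = q ^ (j - (i+1)) * (∫⁻ y in D i, f y ∂μ) * pw j := by ring
  have hup : S ≤ 4 + G + G * I := by
    set J := (Finset.range (N+1)).filter (fun j => 1 ≤ j ∧ j + 3 ≤ N) with hJ
    set J' := (Finset.range (N+1)).filter (fun j => ¬(1 ≤ j ∧ j + 3 ≤ N)) with hJ'
    have hsplit : S = (∑ j ∈ J, μ (ball x₁ (2 ^ j * r₁)) / pw j)
        + ∑ j ∈ J', μ (ball x₁ (2 ^ j * r₁)) / pw j := by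
      rw [hSpw, hJ, hJ']
      exact (Finset.sum_filter_add_sum_filter_not _ _ _).symm
    have hrest : (∑ j ∈ J', μ (ball x₁ (2 ^ j * r₁)) / pw j) ≤ 4 := by
      have hcard : J'.card ≤ 4 := by
        have hsub4 : J' ⊆ {0, N-2, N-1, N} := by
          intro j hj
          rw [hJ', Finset.mem_filter, Finset.mem_range] at hj
          simp only [Finset.mem_insert, Finset.mem_singleton]
          omega
        refine le_trans (Finset.card_le_card hsub4) ?_
        have h1 : ({N-1, N} : Finset ℕ).card ≤ 2 :=
          le_trans (Finset.card_insert_le _ _) (by simp)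
        have h2 : ({N-2, N-1, N} : Finset ℕ).card ≤ 3 :=
          le_trans (Finset.card_insert_le _ _) (by omega)
        exact le_trans (Finset.card_insert_le _ _) (by omega)
      calc (∑ j ∈ J', μ (ball x₁ (2 ^ j * r₁)) / pw j) ≤ ∑ _j ∈ J', 1 :=
            Finset.sum_le_sum fun j _ => hT1 j
        _ = (J'.card : ℝ≥0∞) := by simp
        _ ≤ ((4:ℕ) : ℝ≥0∞) := by exact_mod_cast hcard
        _ = 4 := by norm_num
    have hJsum : (∑ j ∈ J, μ (ball x₁ (2 ^ j * r₁)) / pw j) ≤ G + G * I := by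
      have h1 : (∑ j ∈ J, μ (ball x₁ (2 ^ j * r₁)) / pw j)
          ≤ ∑ j ∈ J, (q ^ j + ∑ i ∈ Finset.range j, q ^ (j-(i+1)) * ∫⁻ y in D i, f y ∂μ) :=
        Finset.sum_le_sum fun j _ => hTj j
      rw [Finset.sum_add_distrib] at h1
      have h2 : (∑ j ∈ J, q ^ j) ≤ G := by
        refine le_trans (ENNReal.sum_le_tsum J) ?_
        rw [ENNReal.tsum_geometric, hG]
      have h3 : (∑ j ∈ J, ∑ i ∈ Finset.range j, q ^ (j-(i+1)) * ∫⁻ y in D i, f y ∂μ)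
          ≤ G * I := by
        have hswap : (∑ j ∈ J, ∑ i ∈ Finset.range j, q ^ (j-(i+1)) * ∫⁻ y in D i, f y ∂μ)
            = ∑ i ∈ Finset.range (N-3), ∑ j ∈ Finset.Ico (i+1) (N-2),
                q ^ (j-(i+1)) * ∫⁻ y in D i, f y ∂μ := by
          refine Finset.sum_comm' ?_
          intro j i
          simp only [hJ, Finset.mem_filter, Finset.mem_range, Finset.mem_Ico]
          omega
        rw [hswap]
        have h4 : ∀ i ∈ Finset.range (N-3),
            (∑ j ∈ Finset.Ico (i+1) (N-2), q ^ (j-(i+1)) * ∫⁻ y in D i, f y ∂μ)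
              ≤ G * ∫⁻ y in D i, f y ∂μ := by
          intro i _
          rw [← Finset.sum_mul]
          refine mul_le_mul_left ?_ _
          calc (∑ j ∈ Finset.Ico (i+1) (N-2), q ^ (j-(i+1)))
              = ∑ k ∈ Finset.range (N-2-(i+1)), q ^ k := by
                rw [Finset.sum_Ico_eq_sum_range]
                exact Finset.sum_congr rfl fun k _ => by congr 1; omega
            _ ≤ ∑' k : ℕ, q ^ k := ENNReal.sum_le_tsum _
            _ = G := by rw [ENNReal.tsum_geometric, hG]
        calc (∑ i ∈ Finset.range (N-3), ∑ j ∈ Finset.Ico (i+1) (N-2),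
                q ^ (j-(i+1)) * ∫⁻ y in D i, f y ∂μ)
            ≤ ∑ i ∈ Finset.range (N-3), G * ∫⁻ y in D i, f y ∂μ := Finset.sum_le_sum h4
          _ = G * ∑ i ∈ Finset.range (N-3), ∫⁻ y in D i, f y ∂μ := by rw [Finset.mul_sum]
          _ ≤ G * I := by
              refine mul_le_mul_right ?_ _
              rw [hI]
              refine sum_lintegral_le μ f _ D _ hDm hDd fun i hi => ?_
              refine hDann i ?_
              rw [Finset.mem_range] at hi
              omega
      calc (∑ j ∈ J, μ (ball x₁ (2 ^ j * r₁)) / pw j)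
          ≤ (∑ j ∈ J, q ^ j)
            + ∑ j ∈ J, ∑ i ∈ Finset.range j, q ^ (j-(i+1)) * ∫⁻ y in D i, f y ∂μ := h1
        _ ≤ G + G * I := add_le_add h2 h3
    calc S = (∑ j ∈ J, μ (ball x₁ (2 ^ j * r₁)) / pw j)
          + ∑ j ∈ J', μ (ball x₁ (2 ^ j * r₁)) / pw j := hsplit
      _ ≤ (G + G * I) + 4 := add_le_add hJsum hrest
      _ = 4 + G + G * I := by ring
  -- the "lower" direction : I ≤ K * (1 + S)
  have hlow : I ≤ K * (1 + S) := by
    rcases Nat.eq_zero_or_pos d with hd0 | hd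
    · subst hd0
      have hset : {y : EuclideanSpace ℝ (Fin 0) | r₁ ≤ dist y x₁ ∧ dist y x₁ ≤ r₂} = ∅ := by
        ext y
        simp only [mem_setOf_eq, mem_empty_iff_false, iff_false, not_and]
        intro h1
        have hy : y = x₁ := Subsingleton.elim y x₁
        rw [hy, dist_self] at h1
        linarith
      have hI0 : I = 0 := by
        rw [hI, hset]
        simp
      rw [hI0]
      exact zero_le
    · haveI : Nonempty (Fin d) := ⟨⟨0, hd⟩⟩
      haveI : Nontrivial (EuclideanSpace ℝ (Fin d)) := inferInstance
      have hA : r₂ ≤ 2 ^ N * r₁ := by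
        by_contra hcon
        push_neg at hcon
        set t := (2 ^ N * r₁ + r₂) / 2 with ht
        have ht1 : 2 ^ N * r₁ < t := by rw [ht]; linarith
        have ht2 : t < r₂ := by rw [ht]; linarith
        have ht0 : 0 ≤ t := le_of_lt (lt_of_lt_of_le (h2r N) ht1.le)
        obtain ⟨v, hv⟩ := exists_norm_eq (EuclideanSpace ℝ (Fin d)) ht0
        have e1 : dist (x₂ + v) x₂ = t := by rw [dist_self_add_left, hv]
        have e2 : dist (x₂ - v) x₂ = t := by rw [dist_self_sub_left, hv]
        have m1 : dist (x₂ + v) x₁ < 2 ^ N * r₁ :=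
          mem_ball.mp (hN (mem_ball.mpr (by rw [e1]; exact ht2)))
        have m2 : dist (x₂ - v) x₁ < 2 ^ N * r₁ :=
          mem_ball.mp (hN (mem_ball.mpr (by rw [e2]; exact ht2)))
        have key : dist (x₂ + v) (x₂ - v) = 2 * t := by
          rw [dist_eq_norm]
          have hvv : (x₂ + v) - (x₂ - v) = v + v := by abel
          rw [hvv, ← two_smul ℝ v, norm_smul]
          simp [hv]
        have htri := dist_triangle (x₂ + v) x₁ (x₂ - v)
        rw [key, dist_comm x₁ (x₂ - v)] at htri
        linarith
      have hcover : {y | r₁ ≤ dist y x₁ ∧ dist y x₁ ≤ r₂} ⊆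
          (⋃ i ∈ Finset.range N, D i) ∪ sphere x₁ (2 ^ N * r₁) := by
        intro y hy
        obtain ⟨hy1, hy2⟩ := hy
        rcases lt_or_eq_of_le (le_trans hy2 hA) with hlt | heq
        · obtain ⟨j, hj, h3, h4⟩ := dyadic_mem hr₁ N hy1 hlt
          exact Or.inl (mem_iUnion₂.mpr ⟨j, Finset.mem_range.mpr hj, (hDmem j y).mpr ⟨h4, h3⟩⟩)
        · exact Or.inr (mem_sphere.mpr heq)
      have hKinv : ∀ i : ℕ, ENNReal.ofReal (((2:ℝ) ^ i * r₁) ^ (-n)) = K * (pw (i+1))⁻¹ := by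
        intro i
        rw [← hinv (i+1), hK, ← ENNReal.ofReal_mul (by positivity)]
        congr 1
        have h := hreal i
        have hpos : (0:ℝ) < ((2:ℝ) ^ (i+1) * r₁) ^ n := Real.rpow_pos_of_pos (h2r (i+1)) n
        rw [Real.rpow_neg (h2r (i+1)).le]
        field_simp
        rw [mul_comm r₁ (2 ^ (i + 1))]
        linear_combination h
      have hP1 : ∀ i : ℕ, (∫⁻ y in D i, f y ∂μ)
          ≤ K * (μ (ball x₁ (2 ^ (i+1) * r₁)) / pw (i+1)) := by
        intro i
        have hb : ∀ y ∈ D i, f y ≤ ENNReal.ofReal (((2:ℝ) ^ i * r₁) ^ (-n)) := by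
          intro y hy
          obtain ⟨hy1, hy2⟩ := (hDmem i y).mp hy
          simp only [hf]
          exact ENNReal.ofReal_le_ofReal
            (Real.rpow_le_rpow_of_nonpos (h2r i) hy2 (neg_nonpos.mpr hn.le))
        calc (∫⁻ y in D i, f y ∂μ)
            ≤ ∫⁻ _ in D i, ENNReal.ofReal (((2:ℝ) ^ i * r₁) ^ (-n)) ∂μ :=
              setLIntegral_mono measurable_const hb
          _ = ENNReal.ofReal (((2:ℝ) ^ i * r₁) ^ (-n)) * μ (D i) := setLIntegral_const _ _
          _ ≤ ENNReal.ofReal (((2:ℝ) ^ i * r₁) ^ (-n)) * μ (ball x₁ (2 ^ (i+1) * r₁)) := by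
              refine mul_le_mul_right (measure_mono ?_) _
              simp only [hD]
              exact Set.diff_subset
          _ = K * (μ (ball x₁ (2 ^ (i+1) * r₁)) / pw (i+1)) := by
              rw [hKinv i, div_eq_mul_inv]; ring
      have hP2 : (∫⁻ y in sphere x₁ (2 ^ N * r₁), f y ∂μ) ≤ K := by
        have hb : ∀ y ∈ sphere x₁ (2 ^ N * r₁),
            f y ≤ ENNReal.ofReal (((2:ℝ) ^ N * r₁) ^ (-n)) := by
          intro y hy
          simp only [hf]
          exact le_of_eq (by rw [mem_sphere.mp hy])
        calc (∫⁻ y in sphere x₁ (2 ^ N * r₁), f y ∂μ)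
            ≤ ∫⁻ _ in sphere x₁ (2 ^ N * r₁), ENNReal.ofReal (((2:ℝ) ^ N * r₁) ^ (-n)) ∂μ :=
              setLIntegral_mono measurable_const hb
          _ = ENNReal.ofReal (((2:ℝ) ^ N * r₁) ^ (-n)) * μ (sphere x₁ (2 ^ N * r₁)) :=
              setLIntegral_const _ _
          _ ≤ ENNReal.ofReal (((2:ℝ) ^ N * r₁) ^ (-n)) * pw (N+1) := by
              refine mul_le_mul_right (le_trans (measure_mono ?_) (hμpw (N+1))) _
              intro y hy
              rw [mem_sphere] at hy
              rw [mem_ball, hy]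
              have hpow : (2:ℝ) ^ N < 2 ^ (N+1) := by
                rw [pow_succ]; nlinarith [pow_pos (by norm_num : (0:ℝ) < 2) N]
              nlinarith
          _ = ENNReal.ofReal (((2:ℝ) ^ N * r₁) ^ (-n) * ((2:ℝ) ^ (N+1) * r₁) ^ n) := by
              simp only [hpw]
              rw [ENNReal.ofReal_mul (Real.rpow_nonneg (h2r N).le _)]
          _ = K := by rw [hreal N, hK]
      have hsum : (∑ i ∈ Finset.range N, μ (ball x₁ (2 ^ (i+1) * r₁)) / pw (i+1)) ≤ S := by
        have he : (∑ i ∈ Finset.range N, μ (ball x₁ (2 ^ (i+1) * r₁)) / pw (i+1))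
            = ∑ j ∈ Finset.Ico 1 (N+1), μ (ball x₁ (2 ^ j * r₁)) / pw j := by
          rw [Finset.sum_Ico_eq_sum_range]
          simp only [Nat.add_sub_cancel]
          exact Finset.sum_congr rfl fun i _ => by rw [Nat.add_comm 1 i]
        rw [he, hSpw]
        refine Finset.sum_le_sum_of_subset ?_
        intro j hj
        rw [Finset.mem_Ico] at hj
        rw [Finset.mem_range]
        omega
      calc I ≤ ∫⁻ y in (⋃ i ∈ Finset.range N, D i) ∪ sphere x₁ (2 ^ N * r₁), f y ∂μ := by
            rw [hI]
            exact lintegral_mono_set hcover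
        _ ≤ (∫⁻ y in ⋃ i ∈ Finset.range N, D i, f y ∂μ)
            + ∫⁻ y in sphere x₁ (2 ^ N * r₁), f y ∂μ := lintegral_union_le _ _ _
        _ ≤ (∑ i ∈ Finset.range N, ∫⁻ y in D i, f y ∂μ) + K :=
            add_le_add (lintegral_biUnion_le μ f _ D) hP2
        _ ≤ (∑ i ∈ Finset.range N, K * (μ (ball x₁ (2 ^ (i+1) * r₁)) / pw (i+1))) + K :=
            add_le_add_left (Finset.sum_le_sum fun i _ => hP1 i) _
        _ = K * (∑ i ∈ Finset.range N, μ (ball x₁ (2 ^ (i+1) * r₁)) / pw (i+1)) + K := by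
            rw [Finset.mul_sum]
        _ ≤ K * S + K := add_le_add_left (mul_le_mul_right hsum _) _
        _ = K * (1 + S) := by ring
  have step1 : 1 + I ≤ (1 + K) * (1 + S) := by
    calc 1 + I ≤ 1 + K * (1 + S) := add_le_add_right hlow _
      _ ≤ (1 + S) + K * (1 + S) := add_le_add le_self_add le_rfl
      _ = (1 + K) * (1 + S) := by ring
  have step2 : (1 + K)⁻¹ * ((1 + K) * (1 + S)) = 1 + S := by
    rw [← mul_assoc, ENNReal.inv_mul_cancel h1K0 h1K, one_mul]
  have step3 : 1 + S ≤ (5 + G) * (1 + I) := by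
    calc 1 + S ≤ 1 + (4 + G + G * I) := add_le_add_right hup _
      _ = (5 + G) + G * I := by ring
      _ ≤ (5 + G) + (5 + G) * I := add_le_add_right (mul_le_mul_left le_add_self _) _
      _ = (5 + G) * (1 + I) := by ring
  exact ⟨le_trans (mul_le_mul_right step1 _) (le_of_eq step2), step3⟩
end

section
/- Let μ be a measure on ℝ^d of n-polynomial growth and suppose there is a two-sided atomic filtration {Σ_k} of supp(μ) such that every atom Q admits a ball B_Q with B_Q ⊂ Q ⊂ 28B_Q, B_Q is (α,β)-doubling, and for every atom Q with parent Q̂ and x ∈ Q, ∫_{αB_{Q̂} \ 56B_Q} |x−y|^{-n} dμ(y) ≤ C₀. Then every f in Tolsa's RBMO(μ) satisfies ‖f‖_{RBMO_Σ(μ)} ≲ ‖f‖_{RBMO(μ)}, where ‖f‖_{RBMO_Σ(μ)} = sup over atoms Q of μ(Q)^{-1}∫_Q |f − ⟨f⟩_{Q̂}| dμ, i.e. RBMO(μ) ⊂ RBMO_Σ(μ). -/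
open MeasureTheory Metric Set
open scoped ENNReal

/-- Average of `f` over a set `Q`. -/
noncomputable def localAvg {Ω : Type} [MeasurableSpace Ω] (μ : Measure Ω)
    (Q : Set Ω) (f : Ω → ℝ) : ℝ :=
  (μ Q).toReal⁻¹ * ∫ x in Q, f x ∂μ

/-- The two-sided atomic filtration of Theorem A: atoms of every generation `k ∈ ℤ`
form (up to `μ`-null sets) a partition of `supp (μ)`, are nested, and every atom `Q`
carries an `(α,β)`-doubling ball `B_Q` with `B_Q ⊆ Q ⊆ 28 B_Q` (up to `μ`-null sets),
together with the weak regularity property (iv)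
`∫_{α B_{Q̂} \ 56 B_Q} |x-y|^{-n} dμ(y) ≤ C₀` for all `x ∈ Q`. -/
structure DMFiltration (d : ℕ) (n α β C₀ : ℝ)
    (μ : Measure (EuclideanSpace ℝ (Fin d))) where
  gen : ℤ → ℕ → Set (EuclideanSpace ℝ (Fin d))
  meas : ∀ k i, MeasurableSet (gen k i)
  pos : ∀ k i, 0 < μ (gen k i)
  fin : ∀ k i, μ (gen k i) < ⊤
  disj : ∀ k, Pairwise fun i j => Disjoint (gen k i) (gen k j)
  cover : ∀ k, μ (Set.univ \ ⋃ i, gen k i) = 0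
  parentIdx : ℤ → ℕ → ℕ
  nested : ∀ k i, gen k i ⊆ gen (k - 1) (parentIdx k i)
  center : ℤ → ℕ → EuclideanSpace ℝ (Fin d)
  radius : ℤ → ℕ → ℝ
  rpos : ∀ k i, 0 < radius k i
  ball_sub : ∀ k i, μ (ball (center k i) (radius k i) \ gen k i) = 0
  sub_ball : ∀ k i, gen k i ⊆ ball (center k i) (28 * radius k i)
  doubling : ∀ k i, μ (ball (center k i) (α * radius k i)) ≤
    ENNReal.ofReal β * μ (ball (center k i) (radius k i))
  reg : ∀ k i, ∀ x ∈ gen k i,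
    ∫⁻ y in ball (center (k-1) (parentIdx k i)) (α * radius (k-1) (parentIdx k i)) \
        ball (center k i) (56 * radius k i),
      ENNReal.ofReal (dist x y ^ (-n)) ∂μ ≤ ENNReal.ofReal C₀

lemma avgdiff {Ω : Type} [MeasurableSpace Ω] (μ : Measure Ω) (Z : Set Ω) (f : Ω → ℝ) (a : ℝ)
    (hpos : 0 < μ Z) (hfin : μ Z ≠ ⊤) (hint : IntegrableOn f Z μ) :
    |localAvg μ Z f - a| ≤ (μ Z).toReal⁻¹ * ∫ y in Z, |f y - a| ∂μ := by
  have ht : 0 < (μ Z).toReal := ENNReal.toReal_pos hpos.ne' hfin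
  have h1 : localAvg μ Z f - a = (μ Z).toReal⁻¹ * ∫ y in Z, (f y - a) ∂μ := by
    rw [integral_sub hint (integrableOn_const hfin), setIntegral_const, measureReal_def, smul_eq_mul]
    unfold localAvg
    field_simp
  rw [h1, abs_mul, abs_of_nonneg (inv_nonneg.2 ht.le)]
  refine mul_le_mul_of_nonneg_left ?_ (inv_nonneg.2 ht.le)
  simpa [Real.norm_eq_abs] using norm_integral_le_integral_norm (μ := μ.restrict Z) (fun y => f y - a)

lemma ratio {Ω : Type} [MeasurableSpace Ω] (μ : Measure Ω) (Z W : Set Ω) (f : Ω → ℝ)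
    (a M β : ℝ) (hM : 0 ≤ M) (hβ : 0 ≤ β)
    (hZW : Z ⊆ W) (hμZ : 0 < μ Z) (hWfin : μ W ≠ ⊤)
    (hcomp : μ W ≤ ENNReal.ofReal β * μ Z)
    (hint : IntegrableOn f W μ)
    (hav : (μ W).toReal⁻¹ * ∫ y in W, |f y - a| ∂μ ≤ M) :
    (μ Z).toReal⁻¹ * ∫ y in Z, |f y - a| ∂μ ≤ β * M := by
  have hμW : 0 < μ W := lt_of_lt_of_le hμZ (measure_mono hZW)
  have hZfin : μ Z ≠ ⊤ := (lt_of_le_of_lt (measure_mono hZW) hWfin.lt_top).ne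
  have htW : 0 < (μ W).toReal := ENNReal.toReal_pos hμW.ne' hWfin
  have htZ : 0 < (μ Z).toReal := ENNReal.toReal_pos hμZ.ne' hZfin
  have hintW : IntegrableOn (fun y => |f y - a|) W μ :=
    (hint.sub (integrableOn_const hWfin)).abs
  have h1 : ∫ y in Z, |f y - a| ∂μ ≤ ∫ y in W, |f y - a| ∂μ :=
    setIntegral_mono_set hintW (Filter.Eventually.of_forall fun y => abs_nonneg _)
      (HasSubset.Subset.eventuallyLE hZW)
  have h2 : ∫ y in W, |f y - a| ∂μ ≤ (μ W).toReal * M := (inv_mul_le_iff₀ htW).mp hav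
  have h3 : (μ W).toReal ≤ β * (μ Z).toReal := by
    have h := ENNReal.toReal_mono (by finiteness) hcomp
    rwa [ENNReal.toReal_mul, ENNReal.toReal_ofReal hβ] at h
  have h4 : ∫ y in Z, |f y - a| ∂μ ≤ β * (μ Z).toReal * M :=
    h1.trans (h2.trans (by nlinarith))
  rw [inv_mul_le_iff₀ htZ]
  calc ∫ y in Z, |f y - a| ∂μ ≤ β * (μ Z).toReal * M := h4
    _ = (μ Z).toReal * (β * M) := by ring

lemma combo {Ω : Type} [MeasurableSpace Ω] (μ : Measure Ω) (Z W : Set Ω) (f : Ω → ℝ)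
    (M β : ℝ) (hM : 0 ≤ M) (hβ : 0 ≤ β)
    (hZW : Z ⊆ W) (hμZ : 0 < μ Z) (hWfin : μ W ≠ ⊤)
    (hcomp : μ W ≤ ENNReal.ofReal β * μ Z)
    (hint : IntegrableOn f W μ)
    (hav : (μ W).toReal⁻¹ * ∫ y in W, |f y - localAvg μ W f| ∂μ ≤ M) :
    |localAvg μ Z f - localAvg μ W f| ≤ β * M := by
  have hZfin : μ Z ≠ ⊤ := (lt_of_le_of_lt (measure_mono hZW) hWfin.lt_top).ne
  exact (avgdiff μ Z f _ hμZ hZfin (hint.mono_set hZW)).trans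
    (ratio μ Z W f _ M β hM hβ hZW hμZ hWfin hcomp hint hav)

lemma step {Ω : Type} [MeasurableSpace Ω] (μ : Measure Ω) (Z : Set Ω) (f : Ω → ℝ) (a b : ℝ)
    (hpos : 0 < μ Z) (hfin : μ Z ≠ ⊤) (hint : IntegrableOn f Z μ) :
    (μ Z).toReal⁻¹ * ∫ x in Z, |f x - a| ∂μ ≤
      ((μ Z).toReal⁻¹ * ∫ x in Z, |f x - b| ∂μ) + |b - a| := by
  have ht : 0 < (μ Z).toReal := ENNReal.toReal_pos hpos.ne' hfin
  have hint1 : IntegrableOn (fun x => |f x - b|) Z μ :=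
    (hint.sub (integrableOn_const hfin)).abs
  have h1 : ∫ x in Z, |f x - a| ∂μ ≤ ∫ x in Z, (|f x - b| + |b - a|) ∂μ := by
    refine integral_mono ((hint.sub (integrableOn_const hfin)).abs)
      (hint1.add (integrableOn_const hfin)) ?_
    intro x
    have := abs_sub_le (f x) b a
    simpa using this
  have h2 : ∫ x in Z, (|f x - b| + |b - a|) ∂μ =
      (∫ x in Z, |f x - b| ∂μ) + (μ Z).toReal * |b - a| := by
    rw [integral_add hint1 (integrableOn_const hfin), setIntegral_const, measureReal_def]
    simp [smul_eq_mul]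
  calc (μ Z).toReal⁻¹ * ∫ x in Z, |f x - a| ∂μ
      ≤ (μ Z).toReal⁻¹ * ((∫ x in Z, |f x - b| ∂μ) + (μ Z).toReal * |b - a|) := by
        refine mul_le_mul_of_nonneg_left ?_ (inv_nonneg.2 ht.le)
        rw [← h2]; exact h1
    _ = ((μ Z).toReal⁻¹ * ∫ x in Z, |f x - b| ∂μ) + |b - a| := by
        field_simp

lemma inner_geom (q : ℝ) (hq0 : 0 ≤ q) (hq1 : q < 1) (ℓ b : ℕ) :
    ∑ j ∈ Finset.Icc (ℓ+1) b, q^(j-ℓ) ≤ (1-q)⁻¹ := by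
  rw [← Finset.Ico_add_one_right_eq_Icc, Finset.sum_Ico_eq_sum_range]
  have he : ∀ k : ℕ, (ℓ+1+k) - ℓ = k+1 := fun k => by omega
  simp only [he]
  calc ∑ k ∈ Finset.range (b+1-(ℓ+1)), q^(k+1)
      ≤ ∑ k ∈ Finset.range (b+1-(ℓ+1)), q^k :=
        Finset.sum_le_sum fun k _ => pow_le_pow_of_le_one hq0 hq1.le (Nat.le_succ k)
    _ ≤ ∑' k : ℕ, q^k := Summable.sum_le_tsum _ (fun i _ => pow_nonneg hq0 i)
        (summable_geometric_of_lt_one hq0 hq1)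
    _ = (1-q)⁻¹ := tsum_geometric_of_lt_one hq0 hq1

lemma double_geom (v : ℕ → ℝ) (hv : ∀ ℓ, 0 ≤ v ℓ) (q : ℝ) (hq0 : 0 ≤ q) (hq1 : q < 1)
    (a b : ℕ) :
    ∑ j ∈ Finset.Icc a b, ∑ ℓ ∈ Finset.Ico a j, v ℓ * q^(j-ℓ)
      ≤ (∑ ℓ ∈ Finset.Ico a b, v ℓ) * (1-q)⁻¹ := by
  have key : ∑ j ∈ Finset.Icc a b, ∑ ℓ ∈ Finset.Ico a j, v ℓ * q^(j-ℓ)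
      = ∑ ℓ ∈ Finset.Ico a b, ∑ j ∈ Finset.Icc (ℓ+1) b, v ℓ * q^(j-ℓ) := by
    rw [Finset.sum_sigma' (Finset.Icc a b) (fun j => Finset.Ico a j)
      (fun j ℓ => v ℓ * q^(j-ℓ)),
      Finset.sum_sigma' (Finset.Ico a b) (fun ℓ => Finset.Icc (ℓ+1) b)
      (fun ℓ j => v ℓ * q^(j-ℓ))]
    refine Finset.sum_nbij' (fun p => ⟨p.2, p.1⟩) (fun p => ⟨p.2, p.1⟩) ?_ ?_ ?_ ?_ ?_
    · rintro ⟨j, ℓ⟩ h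
      simp only [Finset.mem_sigma, Finset.mem_Icc, Finset.mem_Ico] at *
      omega
    · rintro ⟨ℓ, j⟩ h
      simp only [Finset.mem_sigma, Finset.mem_Icc, Finset.mem_Ico] at *
      omega
    · rintro ⟨j, ℓ⟩ _; rfl
    · rintro ⟨ℓ, j⟩ _; rfl
    · rintro ⟨j, ℓ⟩ _; rfl
  rw [key]
  calc ∑ ℓ ∈ Finset.Ico a b, ∑ j ∈ Finset.Icc (ℓ+1) b, v ℓ * q^(j-ℓ)
      = ∑ ℓ ∈ Finset.Ico a b, v ℓ * ∑ j ∈ Finset.Icc (ℓ+1) b, q^(j-ℓ) := by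
        simp [Finset.mul_sum]
    _ ≤ ∑ ℓ ∈ Finset.Ico a b, v ℓ * (1-q)⁻¹ :=
        Finset.sum_le_sum fun ℓ _ =>
          mul_le_mul_of_nonneg_left (inner_geom q hq0 hq1 ℓ b) (hv ℓ)
    _ = (∑ ℓ ∈ Finset.Ico a b, v ℓ) * (1-q)⁻¹ := (Finset.sum_mul _ _ _).symm

set_option maxHeartbeats 1000000 in
lemma sbound {d : ℕ} (n α β C₀ : ℝ) (hn : 0 < n) (hα : 100 ≤ α) (hβ : 1 < β) (hC₀ : 0 ≤ C₀)
    (μ : Measure (EuclideanSpace ℝ (Fin d)))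
    (hgrowth : ∀ (z : EuclideanSpace ℝ (Fin d)) (ρ : ℝ), 0 < ρ →
      μ (ball z ρ) ≤ ENNReal.ofReal (ρ ^ n))
    (c cp x0 : EuclideanSpace ℝ (Fin d)) (r r' : ℝ) (hr : 0 < r) (hr' : 0 < r')
    (hx0 : dist x0 c < r)
    (hcc : dist c cp < r + 28*r')
    (hcase : 7*r < 8*r')
    (hdub : μ (ball c (α*r)) ≤ ENNReal.ofReal β * μ (ball c r))
    (hreg : ∫⁻ y in ball cp (α*r') \ ball c (56*r),
      ENNReal.ofReal (dist x0 y ^ (-n)) ∂μ ≤ ENNReal.ofReal C₀)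
    (N : ℕ) (hN2 : ∀ m : ℕ, 0 < m → m < N → ¬ ball cp (50*r') ⊆ ball c (2^m * r)) :
    ∑ j ∈ Finset.range (N+1), (μ (ball c (2^j*r))).toReal / ((2^j*r)^n)
      ≤ 8 + β * (1 - ((2:ℝ)^n)⁻¹)⁻¹ + (4:ℝ)^n * C₀ * (1 - ((2:ℝ)^n)⁻¹)⁻¹ := by
  classical
  set g : ℝ := (2:ℝ)^n with hgdef
  have hg1 : 1 < g := Real.one_lt_rpow_iff_of_pos (by norm_num) |>.2 (Or.inl ⟨by norm_num, hn⟩)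
  have hg0 : 0 < g := lt_trans one_pos hg1
  set q : ℝ := g⁻¹ with hqdef
  have hq0 : 0 ≤ q := by positivity
  have hq1 : q < 1 := by rw [hqdef]; exact inv_lt_one_of_one_lt₀ hg1
  set G : ℝ := (1-q)⁻¹ with hGdef
  have hG0 : 0 < G := by rw [hGdef]; exact inv_pos.2 (by linarith)
  set rn : ℝ := r ^ n with hrndef
  have hrn : 0 < rn := Real.rpow_pos_of_pos hr n
  have hden : ∀ j:ℕ, ((2:ℝ)^j*r)^n = g^j * rn := by
    intro j
    rw [hrndef, hgdef, Real.mul_rpow (by positivity) hr.le, ← Real.rpow_natCast 2 j,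
      ← Real.rpow_natCast ((2:ℝ)^n) j, ← Real.rpow_mul (by norm_num),
      ← Real.rpow_mul (by norm_num), mul_comm n]
  have h4n : (4:ℝ)^n = g^(2:ℕ) := by
    rw [hgdef, ← Real.rpow_natCast ((2:ℝ)^n) 2, ← Real.rpow_mul (by norm_num)]
    rw [show ((2:ℕ):ℝ) = (2:ℝ) by norm_num]
    rw [show (4:ℝ) = (2:ℝ)^(2:ℝ) by
      rw [show (2:ℝ)^(2:ℝ) = (2:ℝ)^((2:ℕ):ℝ) by norm_num, Real.rpow_natCast]; norm_num]
    rw [← Real.rpow_mul (by norm_num), mul_comm]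
  have hballfin : ∀ (z : EuclideanSpace ℝ (Fin d)) (ρ : ℝ), μ (ball z ρ) < ⊤ := by
    intro z ρ
    rcases le_or_gt ρ 0 with h | h
    · simp [ball_eq_empty.2 h]
    · exact (hgrowth z ρ h).trans_lt ENNReal.ofReal_lt_top
  have hm0 : ∀ j:ℕ, 0 ≤ (μ (ball c (2^j*r))).toReal / ((2^j*r)^n) := by
    intro j; positivity
  have hm1 : ∀ j:ℕ, (μ (ball c (2^j*r))).toReal / ((2^j*r)^n) ≤ 1 := by
    intro j
    have hpos : (0:ℝ) < (2^j*r)^n := Real.rpow_pos_of_pos (by positivity) n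
    rw [div_le_one hpos]
    exact ENNReal.toReal_le_of_le_ofReal (Real.rpow_nonneg (by positivity) n)
      (hgrowth c _ (by positivity))
  set A : ℕ → Set (EuclideanSpace ℝ (Fin d)) :=
    fun ℓ => ball c ((2:ℝ)^(ℓ+1)*r) \ ball c ((2:ℝ)^ℓ*r) with hA
  -- scale bound for relevant annuli
  have hscale : ∀ ℓ, 6 ≤ ℓ → ℓ < N-2 → (2:ℝ)^(ℓ+1)*r ≤ 40*r' := by
    intro ℓ h6 hℓN
    have hN8 : 8 ≤ N := by omega
    have hnc := hN2 (N-1) (by omega) (by omega)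
    rw [Set.not_subset] at hnc
    obtain ⟨y, hy1, hy2⟩ := hnc
    have hy3 : (2:ℝ)^(N-1) * r ≤ dist y c := by
      by_contra h; push_neg at h; exact hy2 (mem_ball.2 h)
    have hy4 : dist y c ≤ dist y cp + dist cp c := dist_triangle y cp c
    have hy5 : dist y cp < 50*r' := mem_ball.1 hy1
    have hcc' : dist cp c < r + 28*r' := by rw [dist_comm]; exact hcc
    have hdist : (2:ℝ)^(N-1)*r < r + 78*r' := by linarith
    have hp : (2:ℝ)^(ℓ+1) * 2 ≤ (2:ℝ)^(N-1) := by
      calc (2:ℝ)^(ℓ+1)*2 = 2^(ℓ+2) := by ring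
        _ ≤ 2^(N-1) := pow_le_pow_right₀ (by norm_num) (by omega)
    have hp2 : (2:ℝ)^(ℓ+1)*2*r ≤ (2:ℝ)^(N-1)*r := mul_le_mul_of_nonneg_right hp hr.le
    linarith
  have h64 : ∀ ℓ : ℕ, 6 ≤ ℓ → (64:ℝ) ≤ (2:ℝ)^ℓ := by
    intro ℓ h6
    calc (64:ℝ) = 2^(6:ℕ) := by norm_num
      _ ≤ 2^ℓ := pow_le_pow_right₀ (by norm_num) h6
  have hAdom : ∀ ℓ ∈ Finset.Ico 6 (N-2), A ℓ ⊆ ball cp (α*r') \ ball c (56*r) := by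
    intro ℓ hℓ y hy
    simp only [Finset.mem_Ico] at hℓ
    obtain ⟨hy1, hy2⟩ := hy
    have hge : (2:ℝ)^ℓ * r ≤ dist y c := by
      by_contra h; push_neg at h; exact hy2 (mem_ball.2 h)
    have hlt : dist y c < (2:ℝ)^(ℓ+1)*r := mem_ball.1 hy1
    have hsc := hscale ℓ hℓ.1 hℓ.2
    have h64' := h64 ℓ hℓ.1
    constructor
    · have htri : dist y cp ≤ dist y c + dist c cp := dist_triangle y c cp
      have hαr : 100*r' ≤ α*r' := mul_le_mul_of_nonneg_right hα hr'.le
      exact mem_ball.2 (by linarith)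
    · intro hmem
      have h56 := mem_ball.1 hmem
      have h64r : 64*r ≤ (2:ℝ)^ℓ*r := mul_le_mul_of_nonneg_right h64' hr.le
      linarith
  have hAdisj : (↑(Finset.Ico 6 (N-2)) : Set ℕ).PairwiseDisjoint A := by
    have hlt : ∀ ℓ ℓ' : ℕ, ℓ < ℓ' → Disjoint (A ℓ) (A ℓ') := by
      intro ℓ ℓ' h
      refine Set.disjoint_left.2 fun y hy hy' => hy'.2 ?_
      have h1 : (2:ℝ)^(ℓ+1)*r ≤ (2:ℝ)^ℓ'*r :=
        mul_le_mul_of_nonneg_right (pow_le_pow_right₀ (by norm_num) h) hr.le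
      exact ball_subset_ball h1 hy.1
    intro ℓ _ ℓ' _ hne
    rcases hne.lt_or_gt with h | h
    · exact hlt ℓ ℓ' h
    · exact (hlt ℓ' ℓ h).symm
  set w : ℕ → ℝ≥0∞ := fun ℓ => ∫⁻ y in A ℓ, ENNReal.ofReal (dist x0 y ^ (-n)) ∂μ with hw
  have hwsum : ∑ ℓ ∈ Finset.Ico 6 (N-2), w ℓ ≤ ENNReal.ofReal C₀ := by
    have hmeas : ∀ ℓ ∈ Finset.Ico 6 (N-2), MeasurableSet (A ℓ) :=
      fun ℓ _ => measurableSet_ball.diff measurableSet_ball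
    rw [hw]
    rw [← lintegral_biUnion_finset hAdisj hmeas]
    refine le_trans (lintegral_mono_set ?_) hreg
    exact Set.iUnion₂_subset hAdom
  have hwfin : ∀ ℓ ∈ Finset.Ico 6 (N-2), w ℓ ≠ ⊤ := by
    intro ℓ hℓ
    exact ((Finset.single_le_sum (f := w) (fun i _ => zero_le) hℓ).trans hwsum |>.trans_lt
      ENNReal.ofReal_lt_top).ne
  have hμA : ∀ ℓ ∈ Finset.Ico 6 (N-2),
      (μ (A ℓ)).toReal ≤ ((2:ℝ)^(ℓ+2)*r)^n * (w ℓ).toReal := by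
    intro ℓ hℓ0
    have hℓ := Finset.mem_Ico.1 hℓ0
    have hpos2 : (0:ℝ) < (2:ℝ)^(ℓ+2)*r := by positivity
    have h64' := h64 ℓ hℓ.1
    have hkey : ENNReal.ofReal (((2:ℝ)^(ℓ+2)*r)^(-n)) * μ (A ℓ) ≤ w ℓ := by
      rw [← setLIntegral_const (A ℓ) _]
      refine setLIntegral_mono ?_ ?_
      · have hmd : Measurable (dist x0) := (continuous_const.dist continuous_id).measurable
        measurability
      · intro y hy
        obtain ⟨hy1, hy2⟩ := hy
        have hge : (2:ℝ)^ℓ * r ≤ dist y c := by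
          by_contra h; push_neg at h; exact hy2 (mem_ball.2 h)
        have hlt : dist y c < (2:ℝ)^(ℓ+1)*r := mem_ball.1 hy1
        have h1 : dist x0 y ≤ (2:ℝ)^(ℓ+2)*r := by
          have htri : dist x0 y ≤ dist x0 c + dist c y := dist_triangle x0 c y
          have hcy : dist c y = dist y c := dist_comm c y
          have hone : (1:ℝ)*r ≤ (2:ℝ)^(ℓ+1)*r :=
            mul_le_mul_of_nonneg_right (one_le_pow₀ (by norm_num)) hr.le
          have h2 : ((2:ℝ)^(ℓ+2))*r = 2*((2:ℝ)^(ℓ+1)*r) := by ring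
          linarith
        have h0 : 0 < dist x0 y := by
          have htri2 : dist y c ≤ dist y x0 + dist x0 c := dist_triangle y x0 c
          have hyx : dist y x0 = dist x0 y := dist_comm y x0
          have h64r : 64*r ≤ (2:ℝ)^ℓ*r := mul_le_mul_of_nonneg_right h64' hr.le
          linarith
        refine ENNReal.ofReal_le_ofReal ?_
        rw [Real.rpow_neg dist_nonneg, Real.rpow_neg hpos2.le]
        exact inv_anti₀ (Real.rpow_pos_of_pos h0 n)
          (Real.rpow_le_rpow dist_nonneg h1 hn.le)
    have h2 : μ (A ℓ) ≤ ENNReal.ofReal (((2:ℝ)^(ℓ+2)*r)^n) * w ℓ := by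
      calc μ (A ℓ) = ENNReal.ofReal (((2:ℝ)^(ℓ+2)*r)^n) *
            (ENNReal.ofReal (((2:ℝ)^(ℓ+2)*r)^(-n)) * μ (A ℓ)) := by
            rw [← mul_assoc, ← ENNReal.ofReal_mul (Real.rpow_nonneg hpos2.le n),
              ← Real.rpow_add hpos2, add_neg_cancel, Real.rpow_zero, ENNReal.ofReal_one,
              one_mul]
        _ ≤ _ := mul_le_mul_right hkey _
    have h3 := ENNReal.toReal_mono (ENNReal.mul_ne_top ENNReal.ofReal_ne_top (hwfin ℓ hℓ0)) h2
    rwa [ENNReal.toReal_mul, ENNReal.toReal_ofReal (Real.rpow_nonneg hpos2.le n)] at h3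
  have hvsum : ∑ ℓ ∈ Finset.Ico 6 (N-2), (μ (A ℓ)).toReal / (g^ℓ * rn) ≤ (4:ℝ)^n * C₀ := by
    have hv4 : ∀ ℓ ∈ Finset.Ico 6 (N-2),
        (μ (A ℓ)).toReal / (g^ℓ * rn) ≤ (4:ℝ)^n * (w ℓ).toReal := by
      intro ℓ hℓ
      have h1 := hμA ℓ hℓ
      have h2 : ((2:ℝ)^(ℓ+2)*r)^n = (4:ℝ)^n * (g^ℓ * rn) := by
        rw [hden (ℓ+2), h4n]; ring
      rw [div_le_iff₀ (by positivity)]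
      calc (μ (A ℓ)).toReal ≤ ((2:ℝ)^(ℓ+2)*r)^n * (w ℓ).toReal := h1
        _ = (4:ℝ)^n * (w ℓ).toReal * (g^ℓ * rn) := by rw [h2]; ring
    have h4pos : (0:ℝ) < (4:ℝ)^n := Real.rpow_pos_of_pos (by norm_num) n
    calc ∑ ℓ ∈ Finset.Ico 6 (N-2), (μ (A ℓ)).toReal / (g^ℓ * rn)
        ≤ ∑ ℓ ∈ Finset.Ico 6 (N-2), (4:ℝ)^n * (w ℓ).toReal := Finset.sum_le_sum hv4
      _ = (4:ℝ)^n * ∑ ℓ ∈ Finset.Ico 6 (N-2), (w ℓ).toReal := by rw [Finset.mul_sum]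
      _ ≤ (4:ℝ)^n * C₀ := by
          refine mul_le_mul_of_nonneg_left ?_ h4pos.le
          rw [← ENNReal.toReal_sum hwfin]
          exact ENNReal.toReal_le_of_le_ofReal hC₀ hwsum
  have hdec : ∀ m:ℕ, μ (ball c ((2:ℝ)^(6+m)*r)) ≤
      μ (ball c ((2:ℝ)^(6:ℕ)*r)) + ∑ ℓ ∈ Finset.Ico 6 (6+m), μ (A ℓ) := by
    intro m
    induction m with
    | zero => simp
    | succ m ih =>
      have hsub : ball c ((2:ℝ)^(6+m)*r) ⊆ ball c ((2:ℝ)^(6+m+1)*r) :=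
        ball_subset_ball (mul_le_mul_of_nonneg_right
          (pow_le_pow_right₀ (by norm_num) (by omega)) hr.le)
      have heq : ball c ((2:ℝ)^(6+m+1)*r) = ball c ((2:ℝ)^(6+m)*r) ∪ A (6+m) :=
        (Set.union_diff_cancel hsub).symm
      calc μ (ball c ((2:ℝ)^(6+(m+1))*r))
          = μ (ball c ((2:ℝ)^(6+m)*r) ∪ A (6+m)) := by
            rw [show 6+(m+1) = 6+m+1 from rfl, heq]
        _ ≤ μ (ball c ((2:ℝ)^(6+m)*r)) + μ (A (6+m)) := measure_union_le _ _
        _ ≤ (μ (ball c ((2:ℝ)^(6:ℕ)*r)) + ∑ ℓ ∈ Finset.Ico 6 (6+m), μ (A ℓ)) + μ (A (6+m)) :=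
            add_le_add ih le_rfl
        _ = μ (ball c ((2:ℝ)^(6:ℕ)*r)) + ∑ ℓ ∈ Finset.Ico 6 (6+(m+1)), μ (A ℓ) := by
            rw [show 6+(m+1) = (6+m)+1 from rfl, Finset.sum_Ico_succ_top (by omega), add_assoc]
  have hbase : (μ (ball c ((2:ℝ)^(6:ℕ)*r))).toReal ≤ β * rn := by
    have hle : ((2:ℝ)^(6:ℕ))*r ≤ α*r := by
      have h1 : (64:ℝ) ≤ α := by linarith
      have h2 := mul_le_mul_of_nonneg_right h1 hr.le
      norm_num
      linarith
    have h1 : μ (ball c ((2:ℝ)^(6:ℕ)*r)) ≤ ENNReal.ofReal β * μ (ball c r) :=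
      (measure_mono (ball_subset_ball hle)).trans hdub
    have h2 : ENNReal.ofReal β * μ (ball c r) ≤ ENNReal.ofReal β * ENNReal.ofReal (r^n) :=
      mul_le_mul_right (hgrowth c r hr) _
    have h3 := h1.trans h2
    rw [← ENNReal.ofReal_mul (by linarith : (0:ℝ) ≤ β)] at h3
    rw [hrndef]
    exact ENNReal.toReal_le_of_le_ofReal
      (mul_nonneg (by linarith) (Real.rpow_nonneg hr.le n)) h3
  have hmidj : ∀ j ∈ Finset.Icc 6 (N-2),
      (μ (ball c ((2:ℝ)^j*r))).toReal / (((2:ℝ)^j*r)^n)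
        ≤ β * q^j + ∑ ℓ ∈ Finset.Ico 6 j, ((μ (A ℓ)).toReal / (g^ℓ * rn)) * q^(j-ℓ) := by
    intro j hj
    have hj' := Finset.mem_Icc.1 hj
    have hdecj := hdec (j-6)
    rw [show 6+(j-6) = j by omega] at hdecj
    have hAfin : ∀ ℓ ∈ Finset.Ico 6 j, μ (A ℓ) ≠ ⊤ :=
      fun ℓ _ => ((measure_mono Set.diff_subset).trans_lt (hballfin _ _)).ne
    have hsumfin : ∑ ℓ ∈ Finset.Ico 6 j, μ (A ℓ) ≠ ⊤ := by
      refine (ENNReal.sum_lt_top.2 ?_).ne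
      exact fun ℓ hℓ => (hAfin ℓ hℓ).lt_top
    have hnum : (μ (ball c ((2:ℝ)^j*r))).toReal
        ≤ β*rn + ∑ ℓ ∈ Finset.Ico 6 j, (μ (A ℓ)).toReal := by
      have hfin2 : μ (ball c ((2:ℝ)^(6:ℕ)*r)) + ∑ ℓ ∈ Finset.Ico 6 j, μ (A ℓ) ≠ ⊤ :=
        ENNReal.add_ne_top.2 ⟨(hballfin _ _).ne, hsumfin⟩
      have h5 := ENNReal.toReal_mono hfin2 hdecj
      rw [ENNReal.toReal_add (hballfin _ _).ne hsumfin, ENNReal.toReal_sum hAfin] at h5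
      linarith [hbase]
    have hdpos : (0:ℝ) < g^j * rn := by positivity
    rw [hden j, div_le_iff₀ hdpos]
    calc (μ (ball c ((2:ℝ)^j*r))).toReal
        ≤ β*rn + ∑ ℓ ∈ Finset.Ico 6 j, (μ (A ℓ)).toReal := hnum
      _ = (β * q^j + ∑ ℓ ∈ Finset.Ico 6 j,
            ((μ (A ℓ)).toReal / (g^ℓ * rn)) * q^(j-ℓ)) * (g^j*rn) := by
          rw [add_mul, Finset.sum_mul]
          congr 1
          · rw [hqdef, inv_pow]
            field_simp
          · refine Finset.sum_congr rfl fun ℓ hℓ => ?_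
            have hℓ' := Finset.mem_Ico.1 hℓ
            have hsplit : g^j = g^ℓ * g^(j-ℓ) := by
              rw [← pow_add]
              congr 1
              omega
            rw [hqdef, inv_pow, hsplit]
            field_simp
  have hsub6 : Finset.Icc 6 (N-2) ⊆ Finset.range (N+1) := fun j hj => by
    have := Finset.mem_Icc.1 hj
    exact Finset.mem_range.2 (by omega)
  rw [← Finset.sum_sdiff hsub6]
  have houter : ∑ j ∈ Finset.range (N+1) \ Finset.Icc 6 (N-2),
      (μ (ball c ((2:ℝ)^j*r))).toReal / (((2:ℝ)^j*r)^n) ≤ 8 := by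
    have hsub : Finset.range (N+1) \ Finset.Icc 6 (N-2)
        ⊆ Finset.range 6 ∪ {N-1, N} := by
      intro j hj
      simp only [Finset.mem_sdiff, Finset.mem_range, Finset.mem_Icc, Finset.mem_union,
        Finset.mem_insert, Finset.mem_singleton] at *
      omega
    have hcard : (Finset.range 6 ∪ ({N-1, N} : Finset ℕ)).card ≤ 8 := by
      refine le_trans (Finset.card_union_le _ _) ?_
      have h1 : (Finset.range 6).card = 6 := by simp
      have h2 : ({N-1, N} : Finset ℕ).card ≤ 2 := Finset.card_insert_le _ _ |>.trans (by simp)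
      omega
    calc ∑ j ∈ Finset.range (N+1) \ Finset.Icc 6 (N-2),
          (μ (ball c ((2:ℝ)^j*r))).toReal / (((2:ℝ)^j*r)^n)
        ≤ ∑ j ∈ Finset.range 6 ∪ {N-1,N},
            (μ (ball c ((2:ℝ)^j*r))).toReal / (((2:ℝ)^j*r)^n) :=
          Finset.sum_le_sum_of_subset_of_nonneg hsub (fun j _ _ => hm0 j)
      _ ≤ (Finset.range 6 ∪ ({N-1,N} : Finset ℕ)).card • (1:ℝ) :=
          Finset.sum_le_card_nsmul _ _ 1 (fun j _ => hm1 j)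
      _ ≤ 8 := by
          rw [nsmul_eq_mul, mul_one]
          exact_mod_cast hcard
  have hmids : ∑ j ∈ Finset.Icc 6 (N-2),
      (μ (ball c ((2:ℝ)^j*r))).toReal / (((2:ℝ)^j*r)^n) ≤ β*G + (4:ℝ)^n*C₀*G := by
    calc ∑ j ∈ Finset.Icc 6 (N-2),
          (μ (ball c ((2:ℝ)^j*r))).toReal / (((2:ℝ)^j*r)^n)
        ≤ ∑ j ∈ Finset.Icc 6 (N-2), (β * q^j + ∑ ℓ ∈ Finset.Ico 6 j,
            ((μ (A ℓ)).toReal / (g^ℓ * rn)) * q^(j-ℓ)) := Finset.sum_le_sum hmidj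
      _ = β * (∑ j ∈ Finset.Icc 6 (N-2), q^j) + ∑ j ∈ Finset.Icc 6 (N-2),
            ∑ ℓ ∈ Finset.Ico 6 j, ((μ (A ℓ)).toReal / (g^ℓ * rn)) * q^(j-ℓ) := by
          rw [Finset.sum_add_distrib, Finset.mul_sum]
      _ ≤ β * G + (∑ ℓ ∈ Finset.Ico 6 (N-2), (μ (A ℓ)).toReal / (g^ℓ * rn)) * G := by
          refine add_le_add ?_ ?_
          · refine mul_le_mul_of_nonneg_left ?_ (by linarith : (0:ℝ) ≤ β)
            calc ∑ j ∈ Finset.Icc 6 (N-2), q^j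
                ≤ ∑' j : ℕ, q^j := Summable.sum_le_tsum _ (fun i _ => pow_nonneg hq0 i)
                  (summable_geometric_of_lt_one hq0 hq1)
              _ = G := by rw [hGdef]; exact tsum_geometric_of_lt_one hq0 hq1
          · have hdg := double_geom (fun ℓ => (μ (A ℓ)).toReal / (g^ℓ*rn))
              (fun ℓ => by positivity) q hq0 hq1 6 (N-2)
            rw [hGdef]
            exact hdg
      _ ≤ β*G + (4:ℝ)^n*C₀*G := by
          have := mul_le_mul_of_nonneg_right hvsum hG0.le
          linarith
  linarith [houter, hmids]

set_option maxHeartbeats 2000000 in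
/-- `RBMO(μ) ⊆ RBMO_Σ(μ)`: if `‖f‖_{RBMO(μ)} ≤ M` (i.e. the Tolsa
quantities `‖f‖_*` over `(2,β)`-doubling balls and `‖f‖_d` over nested `(2,β)`-doubling
balls are `≤ M`), then `sup_Q ⟨|f - ⟨f⟩_{Q̂}|⟩_Q ≤ C · M` for a constant `C`
depending only on the structural parameters. -/
theorem statement8 (d : ℕ) (n α β C₀ : ℝ) (hn : 0 < n) (hα : 100 ≤ α)
    (hβ : 1 < β) (hC₀ : 0 ≤ C₀) :
    ∃ C : ℝ, 0 < C ∧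
      ∀ (μ : Measure (EuclideanSpace ℝ (Fin d)))
        (_hgrowth : ∀ (z : EuclideanSpace ℝ (Fin d)) (ρ : ℝ), 0 < ρ →
          μ (ball z ρ) ≤ ENNReal.ofReal (ρ ^ n))
        (F : DMFiltration d n α β C₀ μ)
        (f : EuclideanSpace ℝ (Fin d) → ℝ)
        (_hf : ∀ s : Set (EuclideanSpace ℝ (Fin d)), Bornology.IsBounded s →
          IntegrableOn f s μ)
        (M : ℝ) (_hM : 0 ≤ M)
        -- `‖f‖_* ≤ M` : oscillation control on `(2,β)`-doubling balls
        (_hstar : ∀ (x : EuclideanSpace ℝ (Fin d)) (r : ℝ), 0 < r →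
          μ (ball x (2 * r)) ≤ ENNReal.ofReal β * μ (ball x r) →
          (μ (ball x r)).toReal⁻¹ *
              ∫ y in ball x r, |f y - localAvg μ (ball x r) f| ∂μ ≤ M)
        -- `‖f‖_d ≤ M` : control of differences of averages over nested doubling balls
        (_hd : ∀ (x₁ x₂ : EuclideanSpace ℝ (Fin d)) (r₁ r₂ : ℝ) (N : ℕ),
          0 < r₁ → 0 < r₂ →
          μ (ball x₁ (2 * r₁)) ≤ ENNReal.ofReal β * μ (ball x₁ r₁) →
          μ (ball x₂ (2 * r₂)) ≤ ENNReal.ofReal β * μ (ball x₂ r₂) →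
          ball x₁ r₁ ⊆ ball x₂ r₂ → 0 < N →
          ball x₂ r₂ ⊆ ball x₁ (2 ^ N * r₁) →
          (∀ ℓ : ℕ, 0 < ℓ → ℓ < N → ¬ ball x₂ r₂ ⊆ ball x₁ (2 ^ ℓ * r₁)) →
          |localAvg μ (ball x₁ r₁) f - localAvg μ (ball x₂ r₂) f| ≤
            M * (1 + ∑ j ∈ Finset.range (N + 1),
              (μ (ball x₁ (2 ^ j * r₁))).toReal / ((2 ^ j * r₁) ^ n))),
        ∀ (k : ℤ) (i : ℕ),
          (μ (F.gen k i)).toReal⁻¹ *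
              ∫ x in F.gen k i,
                |f x - localAvg μ (F.gen (k-1) (F.parentIdx k i)) f| ∂μ ≤ C * M := by
  classical
  set g : ℝ := (2:ℝ)^n with hgdef
  have hg1 : 1 < g := Real.one_lt_rpow_iff_of_pos (by norm_num) |>.2 (Or.inl ⟨by norm_num, hn⟩)
  have h4pos : (0:ℝ) < (4:ℝ)^n := Real.rpow_pos_of_pos (by norm_num) n
  set G : ℝ := (1 - g⁻¹)⁻¹ with hGdef
  have hG0 : 0 < G := by
    rw [hGdef]
    refine inv_pos.2 ?_
    have : g⁻¹ < 1 := inv_lt_one_of_one_lt₀ hg1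
    linarith
  have hβ0 : (0:ℝ) ≤ β := by linarith
  have hCpos : 0 < 3*β + 9 + β*G + (4:ℝ)^n * C₀ * G := by
    nlinarith [mul_nonneg hβ0 hG0.le, mul_nonneg (mul_nonneg h4pos.le hC₀) hG0.le]
  refine ⟨3*β + 9 + β*G + (4:ℝ)^n * C₀ * G, hCpos, ?_⟩
  intro μ hgrowth F f hf M hM hstar hd k i
  set p := F.parentIdx k i with hpdef
  set c := F.center k i with hcdef
  set r := F.radius k i with hrdef
  set cp := F.center (k-1) p with hcpdef
  set rp := F.radius (k-1) p with hrpdef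
  set Q := F.gen k i with hQdef
  set P := F.gen (k-1) p with hPdef
  have hr : 0 < r := F.rpos k i
  have hrp : 0 < rp := F.rpos (k-1) p
  have hQP : Q ⊆ P := F.nested k i
  have hQ28 : Q ⊆ ball c (28*r) := F.sub_ball k i
  have hP28 : P ⊆ ball cp (28*rp) := F.sub_ball (k-1) p
  have hballfin : ∀ (z : EuclideanSpace ℝ (Fin d)) (ρ : ℝ), μ (ball z ρ) < ⊤ := by
    intro z ρ
    rcases le_or_gt ρ 0 with h | h
    · simp [ball_eq_empty.2 h]
    · exact (hgrowth z ρ h).trans_lt ENNReal.ofReal_lt_top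
  have hμQ : 0 < μ Q := F.pos k i
  have hμP : 0 < μ P := F.pos (k-1) p
  have hQfin : μ Q < ⊤ := F.fin k i
  have hBQ : μ (ball c r) ≤ μ Q := by
    have h1 := measure_le_inter_add_diff μ (ball c r) Q
    rw [F.ball_sub k i, add_zero] at h1
    exact h1.trans (measure_mono Set.inter_subset_right)
  have hBP : μ (ball cp rp) ≤ μ P := by
    have h1 := measure_le_inter_add_diff μ (ball cp rp) P
    rw [F.ball_sub (k-1) p, add_zero] at h1
    exact h1.trans (measure_mono Set.inter_subset_right)
  have hQβ : μ Q ≤ ENNReal.ofReal β * μ (ball c r) := by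
    refine le_trans (measure_mono (hQ28.trans (ball_subset_ball ?_))) (F.doubling k i)
    nlinarith [hr.le]
  have hBpos : 0 < μ (ball c r) := by
    refine pos_iff_ne_zero.2 fun h0 => ?_
    rw [h0, mul_zero, le_zero_iff] at hQβ
    exact hμQ.ne' hQβ
  have hPβ : μ P ≤ ENNReal.ofReal β * μ (ball cp rp) := by
    refine le_trans (measure_mono (hP28.trans (ball_subset_ball ?_))) (F.doubling (k-1) p)
    nlinarith [hrp.le]
  have hBppos : 0 < μ (ball cp rp) := by
    refine pos_iff_ne_zero.2 fun h0 => ?_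
    rw [h0, mul_zero, le_zero_iff] at hPβ
    exact hμP.ne' hPβ
  have hdubc : ∀ s:ℝ, 1 ≤ s → 2*s ≤ α →
      μ (ball c (2*(s*r))) ≤ ENNReal.ofReal β * μ (ball c (s*r)) := by
    intro s h1 h2
    calc μ (ball c (2*(s*r))) ≤ μ (ball c (α*r)) :=
        measure_mono (ball_subset_ball (by nlinarith))
      _ ≤ ENNReal.ofReal β * μ (ball c r) := F.doubling k i
      _ ≤ _ := mul_le_mul_right (measure_mono (ball_subset_ball (by nlinarith))) _
  have hdubcp : ∀ s:ℝ, 1 ≤ s → 2*s ≤ α →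
      μ (ball cp (2*(s*rp))) ≤ ENNReal.ofReal β * μ (ball cp (s*rp)) := by
    intro s h1 h2
    calc μ (ball cp (2*(s*rp))) ≤ μ (ball cp (α*rp)) :=
        measure_mono (ball_subset_ball (by nlinarith))
      _ ≤ ENNReal.ofReal β * μ (ball cp rp) := F.doubling (k-1) p
      _ ≤ _ := mul_le_mul_right (measure_mono (ball_subset_ball (by nlinarith))) _
  obtain ⟨x0, hx0⟩ : (ball c r ∩ Q).Nonempty := by
    apply nonempty_of_measure_ne_zero (μ := μ)
    have h1 := measure_le_inter_add_diff μ (ball c r) Q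
    rw [F.ball_sub k i, add_zero] at h1
    intro h0
    rw [h0, le_zero_iff] at h1
    exact hBpos.ne' h1
  have hx0B : dist x0 c < r := mem_ball.1 hx0.1
  have hx0Q : x0 ∈ Q := hx0.2
  have hcc : dist c cp < r + 28*rp := by
    have h1 : dist c cp ≤ dist c x0 + dist x0 cp := dist_triangle c x0 cp
    have h2 : dist c x0 < r := by rw [dist_comm]; exact hx0B
    have h3 : dist x0 cp < 28*rp := mem_ball.1 (hP28 (hQP hx0Q))
    linarith
  have hfb : ∀ (z : EuclideanSpace ℝ (Fin d)) (ρ : ℝ), IntegrableOn f (ball z ρ) μ :=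
    fun z ρ => hf _ isBounded_ball
  have havW1 := hstar c (50*r) (by positivity) (hdubc 50 (by norm_num) (by linarith))
  have hstep := step μ Q f (localAvg μ P f) (localAvg μ (ball c (50*r)) f) hμQ hQfin.ne
    ((hfb c (28*r)).mono_set hQ28)
  by_cases hcase : 8*rp ≤ 7*r
  · -- Case 1 : the child ball is comparable to (or bigger than) the parent ball
    have hQW : Q ⊆ ball c (50*r) := hQ28.trans (ball_subset_ball (by linarith))
    have hPW : P ⊆ ball c (50*r) := by
      intro y hy
      have h1 : dist y cp < 28*rp := mem_ball.1 (hP28 hy)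
      have h2 : dist y c ≤ dist y cp + dist cp c := dist_triangle y cp c
      have h3 : dist cp c < r + 28*rp := by rw [dist_comm]; exact hcc
      exact mem_ball.2 (by linarith)
    have hcompQ : μ (ball c (50*r)) ≤ ENNReal.ofReal β * μ Q := by
      refine le_trans (measure_mono (ball_subset_ball (by nlinarith [hr.le])))
        ((F.doubling k i).trans ?_)
      exact mul_le_mul_right hBQ _
    have hcompP : μ (ball c (50*r)) ≤ ENNReal.ofReal β * μ P :=
      hcompQ.trans (mul_le_mul_right (measure_mono hQP) _)
    have t1 : (μ Q).toReal⁻¹ * ∫ x in Q, |f x - localAvg μ (ball c (50*r)) f| ∂μ ≤ β*M :=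
      ratio μ Q (ball c (50*r)) f _ M β hM hβ0 hQW hμQ (hballfin _ _).ne hcompQ
        (hfb _ _) havW1
    have t2 : |localAvg μ P f - localAvg μ (ball c (50*r)) f| ≤ β*M :=
      combo μ P (ball c (50*r)) f M β hM hβ0 hPW hμP (hballfin _ _).ne hcompP
        (hfb _ _) havW1
    have habs : |localAvg μ (ball c (50*r)) f - localAvg μ P f| ≤ β*M := by
      rw [abs_sub_comm]; exact t2
    calc (μ Q).toReal⁻¹ * ∫ x in Q, |f x - localAvg μ P f| ∂μ
        ≤ ((μ Q).toReal⁻¹ * ∫ x in Q, |f x - localAvg μ (ball c (50*r)) f| ∂μ) +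
          |localAvg μ (ball c (50*r)) f - localAvg μ P f| := hstep
      _ ≤ β*M + β*M := add_le_add t1 habs
      _ ≤ (3*β + 9 + β*G + (4:ℝ)^n * C₀ * G)*M := by
          nlinarith [mul_nonneg (mul_nonneg hβ0 hG0.le) hM,
            mul_nonneg (mul_nonneg (mul_nonneg h4pos.le hC₀) hG0.le) hM,
            mul_nonneg hβ0 hM, hM]
  · -- Case 2 : the child is genuinely smaller; use the chain through doubling balls
    push_neg at hcase
    have havB2 := hstar cp (50*rp) (by positivity) (hdubcp 50 (by norm_num) (by linarith))
    have hBB2 : ball c r ⊆ ball cp (50*rp) := by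
      intro y hy
      have h1 : dist y c < r := mem_ball.1 hy
      have h2 : dist y cp ≤ dist y c + dist c cp := dist_triangle y c cp
      exact mem_ball.2 (by linarith)
    have hexN : ∃ m:ℕ, 0 < m ∧ ball cp (50*rp) ⊆ ball c (2^m * r) := by
      obtain ⟨m, hm⟩ := pow_unbounded_of_one_lt ((dist c cp + 50*rp)/r)
        (by norm_num : (1:ℝ) < 2)
      refine ⟨m+1, Nat.succ_pos m, fun y hy => ?_⟩
      have h1 : dist y c ≤ dist y cp + dist cp c := dist_triangle y cp c
      have h2 : dist y cp < 50*rp := mem_ball.1 hy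
      have h3 : dist c cp + 50*rp < 2^m * r := by
        rw [div_lt_iff₀ hr] at hm
        linarith
      have h4 : (2:ℝ)^m * r ≤ 2^(m+1) * r :=
        mul_le_mul_of_nonneg_right (pow_le_pow_right₀ (by norm_num) (Nat.le_succ m)) hr.le
      have h5 : dist cp c = dist c cp := dist_comm cp c
      exact mem_ball.2 (by linarith)
    set N := Nat.find hexN with hNdef
    obtain ⟨hNpos, hNsub⟩ := Nat.find_spec hexN
    have hNmin : ∀ ℓ:ℕ, 0 < ℓ → ℓ < N → ¬ ball cp (50*rp) ⊆ ball c (2^ℓ * r) :=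
      fun ℓ h1 h2 hsub => Nat.find_min hexN h2 ⟨h1, hsub⟩
    have hmid := hd c cp r (50*rp) N hr (by positivity)
      (by simpa using hdubc 1 le_rfl (by linarith))
      (hdubcp 50 (by norm_num) (by linarith)) hBB2 hNpos hNsub hNmin
    have hS := sbound n α β C₀ hn hα hβ hC₀ μ hgrowth c cp x0 r rp hr hrp hx0B hcc hcase
      (F.doubling k i) (F.reg k i x0 hx0Q) N hNmin
    have hcompB : μ (ball c (50*r)) ≤ ENNReal.ofReal β * μ (ball c r) :=
      le_trans (measure_mono (ball_subset_ball (by nlinarith [hr.le]))) (F.doubling k i)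
    have t2 : |localAvg μ (ball c r) f - localAvg μ (ball c (50*r)) f| ≤ β*M :=
      combo μ (ball c r) (ball c (50*r)) f M β hM hβ0 (ball_subset_ball (by linarith))
        hBpos (hballfin _ _).ne hcompB (hfb _ _) havW1
    have hcompP2 : μ (ball cp (50*rp)) ≤ ENNReal.ofReal β * μ P :=
      le_trans (measure_mono (ball_subset_ball (by nlinarith [hrp.le])))
        ((F.doubling (k-1) p).trans (mul_le_mul_right hBP _))
    have t4 : |localAvg μ P f - localAvg μ (ball cp (50*rp)) f| ≤ β*M :=
      combo μ P (ball cp (50*rp)) f M β hM hβ0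
        (hP28.trans (ball_subset_ball (by linarith))) hμP (hballfin _ _).ne hcompP2
        (hfb _ _) havB2
    have hcompQ : μ (ball c (50*r)) ≤ ENNReal.ofReal β * μ Q :=
      hcompB.trans (mul_le_mul_right hBQ _)
    have t1 : (μ Q).toReal⁻¹ * ∫ x in Q, |f x - localAvg μ (ball c (50*r)) f| ∂μ ≤ β*M :=
      ratio μ Q (ball c (50*r)) f _ M β hM hβ0
        (hQ28.trans (ball_subset_ball (by linarith))) hμQ (hballfin _ _).ne hcompQ
        (hfb _ _) havW1
    have t3 : |localAvg μ (ball c r) f - localAvg μ (ball cp (50*rp)) f| ≤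
        M*(1 + (8 + β*G + (4:ℝ)^n*C₀*G)) := by
      refine hmid.trans ?_
      have h9 : (1:ℝ) + ∑ j ∈ Finset.range (N + 1),
          (μ (ball c (2 ^ j * r))).toReal / ((2 ^ j * r) ^ n)
            ≤ 1 + (8 + β*G + (4:ℝ)^n*C₀*G) := by linarith [hS]
      nlinarith [hM, h9, Finset.sum_nonneg (s := Finset.range (N+1))
        (f := fun j => (μ (ball c ((2:ℝ)^j*r))).toReal / (((2:ℝ)^j*r)^n))
        (fun j _ => by positivity)]
    have hchain : |localAvg μ (ball c (50*r)) f - localAvg μ P f| ≤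
        β*M + M*(1 + (8 + β*G + (4:ℝ)^n*C₀*G)) + β*M := by
      have e : localAvg μ (ball c (50*r)) f - localAvg μ P f =
          -(localAvg μ (ball c r) f - localAvg μ (ball c (50*r)) f) +
          (localAvg μ (ball c r) f - localAvg μ (ball cp (50*rp)) f) +
          -(localAvg μ P f - localAvg μ (ball cp (50*rp)) f) := by ring
      rw [e]
      refine (abs_add_le _ _).trans (add_le_add ((abs_add_le _ _).trans (add_le_add ?_ t3)) ?_)
      · rw [abs_neg]; exact t2
      · rw [abs_neg]; exact t4
    calc (μ Q).toReal⁻¹ * ∫ x in Q, |f x - localAvg μ P f| ∂μ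
        ≤ ((μ Q).toReal⁻¹ * ∫ x in Q, |f x - localAvg μ (ball c (50*r)) f| ∂μ) +
          |localAvg μ (ball c (50*r)) f - localAvg μ P f| := hstep
      _ ≤ β*M + (β*M + M*(1 + (8 + β*G + (4:ℝ)^n*C₀*G)) + β*M) := add_le_add t1 hchain
      _ = (3*β + 9 + β*G + (4:ℝ)^n * C₀ * G)*M := by ring
end

section
/- Maximal function weighted bound with two iterated dyadic maximal functions: let ν be a Borel measure and 𝒟 a dyadic system; the dyadic maximal operator M^ν_𝒟 f(x) = sup_{x∈Q∈𝒟} ν(Q)^{-1}∫_Q |f| dν is bounded on L₂(ν) with norm at most 2 (independent of ν). Consequently, if w > 0 a.e. with [w]_{A₂} = sup_{Q∈𝒟}(w(Q)/μ(Q))(w^{-1}(Q)/μ(Q)) < ∞, then the operator f ↦ M^{w dμ}_𝒟( M^{w^{-1}dμ}_𝒟(|f| w) · w^{-1} ) is bounded on L₂(w dμ) with norm ≤ 4, and hence any operator N satisfying the pointwise bound N f(x) ≤ [w]_{A₂} · M^{wdμ}_𝒟(M^{w^{-1}dμ}_𝒟(|f|w)w^{-1})(x) satisfies ‖N‖_{L₂(wdμ)→L₂(wdμ)}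 ≤ 4[w]_{A₂}. -/
open MeasureTheory Set
open scoped ENNReal

/-- The dyadic maximal operator associated with a countable nested family `D` of
measurable sets, relative to the measure `ν`. -/
noncomputable def dyadicMaximal {E : Type} [MeasurableSpace E]
    (D : ℕ → Set E) (ν : Measure E) (f : E → ℝ≥0∞) (x : E) : ℝ≥0∞ :=
  ⨆ (i : ℕ) (_ : x ∈ D i), (ν (D i))⁻¹ * ∫⁻ y in D i, f y ∂ν

namespace Stmt16

variable {E : Type} [MeasurableSpace E]

/-- Truncated dyadic maximal operator. -/
noncomputable def truncMax (D : ℕ → Set E) (ν : Measure E) (f : E → ℝ≥0∞) (n : ℕ) (x : E) :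
    ℝ≥0∞ :=
  ⨆ (i : ℕ) (_ : i < n ∧ x ∈ D i), (ν (D i))⁻¹ * ∫⁻ y in D i, f y ∂ν

lemma truncMax_mono (D : ℕ → Set E) (ν : Measure E) (f : E → ℝ≥0∞) :
    Monotone (truncMax D ν f) := by
  intro n m h x
  refine iSup_le fun i => iSup_le fun hi => ?_
  exact le_iSup₂ (f := fun i (_ : i < m ∧ x ∈ D i) => (ν (D i))⁻¹ * ∫⁻ y in D i, f y ∂ν) i
    ⟨hi.1.trans_le h, hi.2⟩

lemma iSup_truncMax (D : ℕ → Set E) (ν : Measure E) (f : E → ℝ≥0∞) (x : E) :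
    ⨆ n, truncMax D ν f n x = dyadicMaximal D ν f x := by
  apply le_antisymm
  · refine iSup_le fun n => iSup_le fun i => iSup_le fun hi => ?_
    exact le_iSup₂ (f := fun i (_ : x ∈ D i) => (ν (D i))⁻¹ * ∫⁻ y in D i, f y ∂ν) i hi.2
  · refine iSup_le fun i => iSup_le fun hx => ?_
    refine le_trans ?_ (le_iSup _ (i + 1))
    exact le_iSup₂ (f := fun j (_ : j < i + 1 ∧ x ∈ D j) => (ν (D j))⁻¹ * ∫⁻ y in D j, f y ∂ν) i
      ⟨Nat.lt_succ_self i, hx⟩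

lemma measurable_truncMax (D : ℕ → Set E) (hDmeas : ∀ i, MeasurableSet (D i))
    (ν : Measure E) (f : E → ℝ≥0∞) (n : ℕ) : Measurable (truncMax D ν f n) := by
  apply Measurable.iSup
  intro i
  classical
  by_cases h : i < n
  · have : (fun x => ⨆ (_ : i < n ∧ x ∈ D i), (ν (D i))⁻¹ * ∫⁻ y in D i, f y ∂ν)
        = (D i).indicator (fun _ => (ν (D i))⁻¹ * ∫⁻ y in D i, f y ∂ν) := by
      ext x
      by_cases hx : x ∈ D i <;> simp [indicator, hx, h]
    rw [this]
    exact measurable_const.indicator (hDmeas i)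
  · have : (fun x => ⨆ (_ : i < n ∧ x ∈ D i), (ν (D i))⁻¹ * ∫⁻ y in D i, f y ∂ν)
        = fun _ => 0 := by
      ext x; simp [h]
    rw [this]
    exact measurable_const

lemma measurable_dyadicMaximal (D : ℕ → Set E) (hDmeas : ∀ i, MeasurableSet (D i))
    (ν : Measure E) (f : E → ℝ≥0∞) : Measurable (dyadicMaximal D ν f) := by
  apply Measurable.iSup
  intro i
  have : (fun x => ⨆ (_ : x ∈ D i), (ν (D i))⁻¹ * ∫⁻ y in D i, f y ∂ν)
      = (D i).indicator (fun _ => (ν (D i))⁻¹ * ∫⁻ y in D i, f y ∂ν) := by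
    ext x
    by_cases hx : x ∈ D i <;> simp [indicator, hx]
  rw [this]
  exact measurable_const.indicator (hDmeas i)

lemma finite_union_bound (D : ℕ → Set E) (hDmeas : ∀ i, MeasurableSet (D i))
    (hDnested : ∀ i j, D i ⊆ D j ∨ D j ⊆ D i ∨ Disjoint (D i) (D j))
    (ν : Measure E) (f : E → ℝ≥0∞) (t : ℝ≥0∞) :
    ∀ F : Finset ℕ, (∀ i ∈ F, t * ν (D i) ≤ ∫⁻ y in D i, f y ∂ν) →
      t * ν (⋃ i ∈ F, D i) ≤ ∫⁻ y in ⋃ i ∈ F, D i, f y ∂ν := by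
  classical
  intro F
  induction F using Finset.strongInduction with
  | _ F ih =>
    intro hF
    rcases F.eq_empty_or_nonempty with rfl | hne
    · simp
    obtain ⟨m, hmF, hmax⟩ := Set.Finite.exists_maximalFor (fun i => D i) (↑F : Set ℕ)
      F.finite_toSet (by exact_mod_cast hne)
    have hmF' : m ∈ F := by exact_mod_cast hmF
    set F' := F.filter (fun i => ¬ D i ⊆ D m) with hF'def
    have hmnot : m ∉ F' := by simp [hF'def]
    have hss : F' ⊂ F :=
      (Finset.ssubset_iff_of_subset (Finset.filter_subset _ _)).mpr ⟨m, hmF', hmnot⟩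
    have hU : (⋃ i ∈ F, D i) = D m ∪ ⋃ i ∈ F', D i := by
      apply Set.Subset.antisymm
      · intro x hx
        rcases Set.mem_iUnion₂.mp hx with ⟨i, hiF, hxi⟩
        by_cases hsub : D i ⊆ D m
        · exact Or.inl (hsub hxi)
        · exact Or.inr (Set.mem_iUnion₂.mpr ⟨i, Finset.mem_filter.mpr ⟨hiF, hsub⟩, hxi⟩)
      · apply Set.union_subset
        · exact Set.subset_biUnion_of_mem hmF'
        · exact Set.iUnion₂_mono' fun i hi =>
            ⟨i, (Finset.mem_filter.mp hi).1, subset_rfl⟩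
    have hdisj : Disjoint (D m) (⋃ i ∈ F', D i) := by
      rw [Set.disjoint_iUnion₂_right]
      intro i hi
      have hi' := Finset.mem_filter.mp hi
      rcases hDnested m i with h1 | h2 | h3
      · have heq := @hmax i (by exact_mod_cast hi'.1) h1
        exact absurd heq hi'.2
      · exact absurd h2 hi'.2
      · exact h3
    have hUm : MeasurableSet (⋃ i ∈ F', D i) :=
      F'.measurableSet_biUnion (fun i _ => hDmeas i)
    rw [hU, measure_union hdisj hUm, lintegral_union hUm hdisj, mul_add]
    exact add_le_add (hF m hmF')
      (ih F' hss fun i hi => hF i (Finset.filter_subset _ _ hi))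

lemma countable_union_bound (D : ℕ → Set E) (hDmeas : ∀ i, MeasurableSet (D i))
    (hDnested : ∀ i j, D i ⊆ D j ∨ D j ⊆ D i ∨ Disjoint (D i) (D j))
    (ν : Measure E) (f : E → ℝ≥0∞) (t : ℝ≥0∞) (P : ℕ → Prop)
    (hP : ∀ i, P i → t * ν (D i) ≤ ∫⁻ y in D i, f y ∂ν) :
    t * ν (⋃ (i) (_ : P i), D i) ≤ ∫⁻ y in ⋃ (i) (_ : P i), D i, f y ∂ν := by
  classical
  set U : ℕ → Set E := fun n => ⋃ i ∈ (Finset.range n).filter P, D i with hUdef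
  have hmono : Monotone U := by
    intro n m h
    apply Set.iUnion₂_mono'
    intro i hi
    refine ⟨i, ?_, subset_rfl⟩
    rcases Finset.mem_filter.mp hi with ⟨hr, hp⟩
    exact Finset.mem_filter.mpr ⟨Finset.mem_range.mpr ((Finset.mem_range.mp hr).trans_le h), hp⟩
  have hUnion : (⋃ (i) (_ : P i), D i) = ⋃ n, U n := by
    ext x
    simp only [Set.mem_iUnion, hUdef, Finset.mem_filter, Finset.mem_range]
    constructor
    · rintro ⟨i, hPi, hx⟩; exact ⟨i + 1, i, ⟨Nat.lt_succ_self i, hPi⟩, hx⟩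
    · rintro ⟨n, i, ⟨_, hPi⟩, hx⟩; exact ⟨i, hPi, hx⟩
  rw [hUnion, (hmono.directed_le).measure_iUnion, ENNReal.mul_iSup]
  refine iSup_le fun n => ?_
  calc t * ν (U n) ≤ ∫⁻ y in U n, f y ∂ν :=
        finite_union_bound D hDmeas hDnested ν f t _
          (fun i hi => hP i (Finset.mem_filter.mp hi).2)
    _ ≤ ∫⁻ y in ⋃ n, U n, f y ∂ν := lintegral_mono_set (Set.subset_iUnion U n)

lemma weak_type (D : ℕ → Set E) (hDmeas : ∀ i, MeasurableSet (D i))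
    (hDnested : ∀ i j, D i ⊆ D j ∨ D j ⊆ D i ∨ Disjoint (D i) (D j))
    (ν : Measure E) (f : E → ℝ≥0∞) (n : ℕ) (t : ℝ≥0∞) :
    t * ν {x | t < truncMax D ν f n x} ≤ ∫⁻ y in {x | t ≤ truncMax D ν f n x}, f y ∂ν := by
  set c : ℕ → ℝ≥0∞ := fun i => (ν (D i))⁻¹ * ∫⁻ y in D i, f y ∂ν with hc
  set P : ℕ → Prop := fun i =>
    (i < n ∧ 0 < ν (D i)) ∧ ν (D i) < ⊤ ∧ t * ν (D i) ≤ ∫⁻ y in D i, f y ∂ν with hP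
  set U : Set E := ⋃ (i) (_ : P i), D i with hU
  have hAU : {x | t < truncMax D ν f n x} ⊆ U := by
    intro x hx
    obtain ⟨i, hi⟩ := lt_iSup_iff.mp (show t < truncMax D ν f n x from hx)
    obtain ⟨⟨hin, hxD⟩, hlt⟩ := lt_iSup_iff.mp hi
    have h0 : ν (D i) ≠ 0 := by
      intro h
      simp only [setLIntegral_measure_zero _ _ h, mul_zero] at hlt
      exact absurd hlt (by simp)
    have htop : ν (D i) ≠ ⊤ := by
      intro h
      simp only [h, ENNReal.inv_top, zero_mul] at hlt
      exact absurd hlt (by simp)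
    have hbound : t * ν (D i) ≤ ∫⁻ y in D i, f y ∂ν := by
      calc t * ν (D i) ≤ ((ν (D i))⁻¹ * ∫⁻ y in D i, f y ∂ν) * ν (D i) :=
            mul_le_mul_left hlt.le _
        _ = (∫⁻ y in D i, f y ∂ν) * ((ν (D i))⁻¹ * ν (D i)) := by ring
        _ = ∫⁻ y in D i, f y ∂ν := by
            rw [ENNReal.inv_mul_cancel h0 htop, mul_one]
    exact Set.mem_iUnion₂.mpr
      ⟨i, ⟨⟨hin, pos_iff_ne_zero.mpr h0⟩, lt_top_iff_ne_top.mpr htop, hbound⟩, hxD⟩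
  have hUB : U ⊆ {x | t ≤ truncMax D ν f n x} := by
    intro x hx
    obtain ⟨i, hPi, hxD⟩ := Set.mem_iUnion₂.mp hx
    obtain ⟨⟨hin, h0⟩, htop, hb⟩ := hPi
    have hle : t ≤ c i := by
      calc t = t * ν (D i) * (ν (D i))⁻¹ := by
            rw [mul_assoc, ENNReal.mul_inv_cancel h0.ne' htop.ne, mul_one]
        _ ≤ (∫⁻ y in D i, f y ∂ν) * (ν (D i))⁻¹ := mul_le_mul_left hb _
        _ = c i := mul_comm _ _
    exact hle.trans (le_iSup₂ (f := fun i (_ : i < n ∧ x ∈ D i) => c i) i ⟨hin, hxD⟩)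
  calc t * ν {x | t < truncMax D ν f n x} ≤ t * ν U :=
        mul_le_mul_right (measure_mono hAU) t
    _ ≤ ∫⁻ y in U, f y ∂ν :=
        countable_union_bound D hDmeas hDnested ν f t P (fun i hi => hi.2.2)
    _ ≤ ∫⁻ y in {x | t ≤ truncMax D ν f n x}, f y ∂ν := lintegral_mono_set hUB

lemma lintegral_ofReal_Ioi_top : ∫⁻ t in Ioi (0:ℝ), ENNReal.ofReal t = ⊤ := by
  apply top_unique
  calc (⊤:ℝ≥0∞) = 1 * volume (Ioi (1:ℝ)) := by simp [Real.volume_Ioi]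
    _ = ∫⁻ _ in Ioi (1:ℝ), 1 := (setLIntegral_const _ _).symm
    _ ≤ ∫⁻ t in Ioi (1:ℝ), ENNReal.ofReal t := by
        refine setLIntegral_mono' measurableSet_Ioi fun t ht => ?_
        simpa using ENNReal.one_le_ofReal.mpr (le_of_lt ht)
    _ ≤ ∫⁻ t in Ioi (0:ℝ), ENNReal.ofReal t :=
        lintegral_mono_set (Ioi_subset_Ioi (by norm_num))

lemma sq_eq_two_mul_lintegral (a : ℝ≥0∞) :
    a ^ 2 = 2 * ∫⁻ t in Ioi (0:ℝ),
      (if ENNReal.ofReal t < a then ENNReal.ofReal t else 0) := by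
  rcases eq_or_ne a ⊤ with rfl | ha
  · have : ∫⁻ t in Ioi (0:ℝ), (if ENNReal.ofReal t < ⊤ then ENNReal.ofReal t else 0)
        = ∫⁻ t in Ioi (0:ℝ), ENNReal.ofReal t := by
      refine lintegral_congr fun t => ?_
      simp [ENNReal.ofReal_lt_top]
    rw [this, lintegral_ofReal_Ioi_top]
    simp
  · set b := a.toReal with hb
    have hb0 : 0 ≤ b := ENNReal.toReal_nonneg
    have hab : a = ENNReal.ofReal b := (ENNReal.ofReal_toReal ha).symm
    have hcong : ∫⁻ t in Ioi (0:ℝ), (if ENNReal.ofReal t < a then ENNReal.ofReal t else 0)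
        = ∫⁻ t in Ioo (0:ℝ) b, ENNReal.ofReal t := by
      rw [← lintegral_indicator measurableSet_Ioi, ← lintegral_indicator measurableSet_Ioo]
      refine lintegral_congr fun t => ?_
      by_cases ht : t ∈ Ioi (0:ℝ)
      · rw [Set.indicator_of_mem ht]
        by_cases htb : t < b
        · have : ENNReal.ofReal t < a := by
            rw [hab]; exact (ENNReal.ofReal_lt_ofReal_iff_of_nonneg (le_of_lt ht)).mpr htb
          rw [if_pos this, Set.indicator_of_mem (Set.mem_Ioo.mpr ⟨ht, htb⟩)]
        · have : ¬ ENNReal.ofReal t < a := by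
            rw [hab]
            intro hcon
            exact htb ((ENNReal.ofReal_lt_ofReal_iff_of_nonneg (le_of_lt ht)).mp hcon)
          rw [if_neg this, Set.indicator_of_notMem (fun hmem => htb hmem.2)]
      · rw [Set.indicator_of_notMem ht,
          Set.indicator_of_notMem (fun hmem => ht hmem.1)]
    have hval : ∫⁻ t in Ioo (0:ℝ) b, ENNReal.ofReal t = ENNReal.ofReal (b ^ 2 / 2) := by
      have hint : IntegrableOn (fun t : ℝ => t) (Ioo 0 b) volume :=
        (continuous_id.integrableOn_Icc).mono_set Ioo_subset_Icc_self
      have := MeasureTheory.ofReal_integral_eq_lintegral_ofReal hint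
        (Filter.eventually_of_mem (self_mem_ae_restrict measurableSet_Ioo)
          (fun t ht => le_of_lt ht.1))
      rw [← this]
      congr 1
      rw [← MeasureTheory.integral_Ioc_eq_integral_Ioo,
        ← intervalIntegral.integral_of_le hb0, integral_id]
      ring
    rw [hcong, hval, hab, ← ENNReal.ofReal_pow hb0, ← ENNReal.ofReal_ofNat 2,
      ← ENNReal.ofReal_mul (by norm_num)]
    congr 1
    ring

lemma lintegral_indicator_le_eq (a : ℝ≥0∞) :
    ∫⁻ t in Ioi (0:ℝ), (if ENNReal.ofReal t ≤ a then 1 else 0) = a := by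
  rcases eq_or_ne a ⊤ with rfl | ha
  · have : ∫⁻ t in Ioi (0:ℝ), (if ENNReal.ofReal t ≤ ⊤ then (1:ℝ≥0∞) else 0)
        = ∫⁻ _ in Ioi (0:ℝ), (1:ℝ≥0∞) := by
      refine lintegral_congr fun t => ?_
      simp
    rw [this, setLIntegral_const, one_mul, Real.volume_Ioi]
  · set b := a.toReal with hb
    have hb0 : 0 ≤ b := ENNReal.toReal_nonneg
    have hab : a = ENNReal.ofReal b := (ENNReal.ofReal_toReal ha).symm
    have hcong : ∫⁻ t in Ioi (0:ℝ), (if ENNReal.ofReal t ≤ a then (1:ℝ≥0∞) else 0)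
        = ∫⁻ t in Ioc (0:ℝ) b, (1:ℝ≥0∞) := by
      rw [← lintegral_indicator measurableSet_Ioi, ← lintegral_indicator measurableSet_Ioc]
      refine lintegral_congr fun t => ?_
      by_cases ht : t ∈ Ioi (0:ℝ)
      · rw [Set.indicator_of_mem ht]
        by_cases htb : t ≤ b
        · have : ENNReal.ofReal t ≤ a := by
            rw [hab]; exact ENNReal.ofReal_le_ofReal htb
          rw [if_pos this, Set.indicator_of_mem (Set.mem_Ioc.mpr ⟨ht, htb⟩)]
        · have : ¬ ENNReal.ofReal t ≤ a := by
            rw [hab]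
            intro hcon
            exact htb ((ENNReal.ofReal_le_ofReal_iff hb0).mp hcon)
          rw [if_neg this, Set.indicator_of_notMem (fun hmem => htb hmem.2)]
      · rw [Set.indicator_of_notMem ht,
          Set.indicator_of_notMem (fun hmem => ht hmem.1)]
    rw [hcong, setLIntegral_const, one_mul, Real.volume_Ioc, hab]
    congr 1
    simp

lemma layercake {α : Type} [MeasurableSpace α] (ρ : Measure α) [IsFiniteMeasure ρ]
    (g f : α → ℝ≥0∞) (hg : Measurable g) (hf : Measurable f)
    (hw : ∀ t : ℝ, 0 < t → ENNReal.ofReal t * ρ {x | ENNReal.ofReal t < g x}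
        ≤ ∫⁻ y in {x | ENNReal.ofReal t ≤ g x}, f y ∂ρ) :
    ∫⁻ x, g x ^ 2 ∂ρ ≤ 2 * ∫⁻ x, f x * g x ∂ρ := by
  set vol : Measure ℝ := (volume : Measure ℝ).restrict (Ioi (0:ℝ)) with hvol
  have hmeas1 : Measurable (Function.uncurry fun (x : α) (t : ℝ) =>
      if ENNReal.ofReal t < g x then ENNReal.ofReal t else 0) := by
    apply Measurable.ite
    · exact measurableSet_lt (ENNReal.measurable_ofReal.comp measurable_snd)
        (hg.comp measurable_fst)
    · exact ENNReal.measurable_ofReal.comp measurable_snd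
    · exact measurable_const
  have hmeas2 : Measurable (Function.uncurry fun (t : ℝ) (x : α) =>
      f x * (if ENNReal.ofReal t ≤ g x then 1 else 0)) := by
    apply Measurable.mul (hf.comp measurable_snd)
    apply Measurable.ite
    · exact measurableSet_le (ENNReal.measurable_ofReal.comp measurable_fst)
        (hg.comp measurable_snd)
    · exact measurable_const
    · exact measurable_const
  calc ∫⁻ x, g x ^ 2 ∂ρ
      = ∫⁻ x, 2 * ∫⁻ t, (if ENNReal.ofReal t < g x then ENNReal.ofReal t else 0) ∂vol ∂ρ := by
        refine lintegral_congr fun x => ?_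
        exact sq_eq_two_mul_lintegral (g x)
    _ = 2 * ∫⁻ x, ∫⁻ t, (if ENNReal.ofReal t < g x then ENNReal.ofReal t else 0) ∂vol ∂ρ := by
        rw [lintegral_const_mul]
        exact hmeas1.lintegral_prod_right
    _ = 2 * ∫⁻ t, ∫⁻ x, (if ENNReal.ofReal t < g x then ENNReal.ofReal t else 0) ∂ρ ∂vol := by
        rw [lintegral_lintegral_swap hmeas1.aemeasurable]
    _ = 2 * ∫⁻ t, ENNReal.ofReal t * ρ {x | ENNReal.ofReal t < g x} ∂vol := by
        congr 1
        refine lintegral_congr fun t => ?_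
        have h1 : (fun x => if ENNReal.ofReal t < g x then ENNReal.ofReal t else 0)
            = {x | ENNReal.ofReal t < g x}.indicator (fun _ => ENNReal.ofReal t) := by
          ext x
          by_cases hx : ENNReal.ofReal t < g x <;> simp [Set.indicator, hx]
        rw [h1, lintegral_indicator_const (measurableSet_lt measurable_const hg)]
    _ ≤ 2 * ∫⁻ t, ∫⁻ y in {x | ENNReal.ofReal t ≤ g x}, f y ∂ρ ∂vol := by
        gcongr 2 * ?_
        exact setLIntegral_mono' measurableSet_Ioi fun t ht => hw t ht
    _ = 2 * ∫⁻ t, ∫⁻ x, f x * (if ENNReal.ofReal t ≤ g x then 1 else 0) ∂ρ ∂vol := by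
        congr 1
        refine lintegral_congr fun t => ?_
        rw [← lintegral_indicator (measurableSet_le measurable_const hg)]
        refine lintegral_congr fun x => ?_
        by_cases hx : ENNReal.ofReal t ≤ g x <;> simp [Set.indicator, hx]
    _ = 2 * ∫⁻ x, ∫⁻ t, f x * (if ENNReal.ofReal t ≤ g x then 1 else 0) ∂vol ∂ρ := by
        rw [lintegral_lintegral_swap hmeas2.aemeasurable]
    _ = 2 * ∫⁻ x, f x * g x ∂ρ := by
        congr 1
        refine lintegral_congr fun x => ?_
        rw [lintegral_const_mul, lintegral_indicator_le_eq (g x)]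
        exact Measurable.ite (measurableSet_le ENNReal.measurable_ofReal measurable_const)
          measurable_const measurable_const

lemma cauchy_schwarz {α : Type} [MeasurableSpace α] (ρ : Measure α) (f g : α → ℝ≥0∞)
    (hf : Measurable f) (hg : Measurable g) :
    ∫⁻ x, f x * g x ∂ρ ≤
      (∫⁻ x, f x ^ 2 ∂ρ) ^ (1/2:ℝ) * (∫⁻ x, g x ^ 2 ∂ρ) ^ (1/2:ℝ) := by
  have hpq : (2:ℝ).HolderConjugate 2 := Real.HolderConjugate.two_two
  have h := ENNReal.lintegral_mul_le_Lp_mul_Lq ρ hpq hf.aemeasurable hg.aemeasurable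
  have h2 : ∀ u : α → ℝ≥0∞, (fun x => u x ^ (2:ℝ)) = fun x => u x ^ 2 := by
    intro u; funext x
    rw [show (2:ℝ) = ((2:ℕ):ℝ) by norm_num, ENNReal.rpow_natCast]
  rw [h2 f, h2 g] at h
  simpa using h

lemma le_four_mul {A B : ℝ≥0∞} (hA : A ≠ ⊤)
    (h : A ≤ 2 * (B ^ (1/2:ℝ) * A ^ (1/2:ℝ))) : A ≤ 4 * B := by
  rcases eq_or_ne A 0 with rfl | hA0
  · exact zero_le
  have hhalf : ∀ C : ℝ≥0∞, C ^ (1/2:ℝ) * C ^ (1/2:ℝ) = C := by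
    intro C
    rw [← ENNReal.rpow_add_of_nonneg _ _ (by norm_num) (by norm_num)]
    norm_num
  have hA2 : A ^ (1/2:ℝ) ≠ 0 := by
    simp [ENNReal.rpow_eq_zero_iff, hA0, hA]
  have hA2t : A ^ (1/2:ℝ) ≠ ⊤ := by
    simp [ENNReal.rpow_eq_top_iff, hA0, hA]
  have step : A ^ (1/2:ℝ) ≤ 2 * B ^ (1/2:ℝ) := by
    rw [← ENNReal.mul_le_mul_iff_left hA2 hA2t]
    calc A ^ (1/2:ℝ) * A ^ (1/2:ℝ) = A := hhalf A
      _ ≤ 2 * (B ^ (1/2:ℝ) * A ^ (1/2:ℝ)) := h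
      _ = 2 * B ^ (1/2:ℝ) * A ^ (1/2:ℝ) := by ring
  calc A = A ^ (1/2:ℝ) * A ^ (1/2:ℝ) := (hhalf A).symm
    _ ≤ (2 * B ^ (1/2:ℝ)) * (2 * B ^ (1/2:ℝ)) := mul_le_mul' step step
    _ = 4 * (B ^ (1/2:ℝ) * B ^ (1/2:ℝ)) := by ring
    _ = 4 * B := by rw [hhalf B]

lemma trunc_L2 (D : ℕ → Set E) (hDmeas : ∀ i, MeasurableSet (D i))
    (hDnested : ∀ i j, D i ⊆ D j ∨ D j ⊆ D i ∨ Disjoint (D i) (D j))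
    (ν : Measure E) (f : E → ℝ≥0∞) (hf : Measurable f) (n : ℕ) :
    ∫⁻ x, truncMax D ν f n x ^ 2 ∂ν ≤ 4 * ∫⁻ x, f x ^ 2 ∂ν := by
  by_cases hf2 : ∫⁻ x, f x ^ 2 ∂ν = ⊤
  · rw [hf2]
    simp
  classical
  set M := truncMax D ν f n with hM
  have hMmeas : Measurable M := measurable_truncMax D hDmeas ν f n
  set Ω : Set E := ⋃ i ∈ (Finset.range n).filter (fun i => ν (D i) < ⊤), D i with hΩ
  have hΩmeas : MeasurableSet Ω := Finset.measurableSet_biUnion _ fun i _ => hDmeas i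
  have hΩfin : ν Ω < ⊤ := by
    refine lt_of_le_of_lt (measure_biUnion_finset_le _ _) ?_
    rw [ENNReal.sum_lt_top]
    intro i hi
    exact (Finset.mem_filter.mp hi).2
  have hsupp : ∀ x, x ∉ Ω → M x = 0 := by
    intro x hx
    refine le_antisymm (iSup_le fun i => iSup_le fun hi => ?_) zero_le
    have hnot : ¬ ν (D i) < ⊤ := fun hlt => hx (Set.mem_biUnion
      (Finset.mem_filter.mpr ⟨Finset.mem_range.mpr hi.1, hlt⟩) hi.2)
    rw [not_lt, top_le_iff] at hnot
    rw [hnot, ENNReal.inv_top, zero_mul]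
  have hsuppsub : ∀ {x}, 0 < M x → x ∈ Ω := by
    intro x hx
    by_contra h
    rw [hsupp x h] at hx
    exact lt_irrefl _ hx
  set ρ := ν.restrict Ω with hρ
  haveI : IsFiniteMeasure ρ := ⟨by rwa [Measure.restrict_apply_univ]⟩
  have hind : (fun x => M x ^ 2) = Ω.indicator (fun x => M x ^ 2) := by
    funext x
    by_cases hx : x ∈ Ω
    · rw [Set.indicator_of_mem hx]
    · rw [Set.indicator_of_notMem hx, hsupp x hx]
      simp
  have hint_eq : ∫⁻ x, M x ^ 2 ∂ν = ∫⁻ x, M x ^ 2 ∂ρ := by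
    conv_lhs => rw [hind]
    rw [hρ, ← lintegral_indicator hΩmeas]
  have hwρ : ∀ t : ℝ, 0 < t → ENNReal.ofReal t * ρ {x | ENNReal.ofReal t < M x}
      ≤ ∫⁻ y in {x | ENNReal.ofReal t ≤ M x}, f y ∂ρ := by
    intro t ht
    set s := ENNReal.ofReal t with hs
    have hs0 : 0 < s := ENNReal.ofReal_pos.mpr ht
    have hBsub : {x | s ≤ M x} ⊆ Ω := fun x hx => hsuppsub (lt_of_lt_of_le hs0 hx)
    have hAsub : {x | s < M x} ⊆ Ω := fun x hx => hsuppsub (hs0.trans hx)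
    have hA : ρ {x | s < M x} = ν {x | s < M x} := by
      rw [hρ, Measure.restrict_apply (measurableSet_lt measurable_const hMmeas),
        Set.inter_eq_left.mpr hAsub]
    have hB : ∫⁻ y in {x | s ≤ M x}, f y ∂ρ = ∫⁻ y in {x | s ≤ M x}, f y ∂ν := by
      rw [hρ, Measure.restrict_restrict (measurableSet_le measurable_const hMmeas),
        Set.inter_eq_left.mpr hBsub]
    rw [hA, hB]
    exact weak_type D hDmeas hDnested ν f n s
  have key : ∫⁻ x, M x ^ 2 ∂ρ ≤ 2 * ∫⁻ x, f x * M x ∂ρ :=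
    layercake ρ M f hMmeas hf hwρ
  have hAfin : ∫⁻ x, M x ^ 2 ∂ρ ≠ ⊤ := by
    set K : ℝ≥0∞ := ∑ i ∈ Finset.range n, (ν (D i))⁻¹ * ∫⁻ y in D i, f y ∂ν with hK
    have hci : ∀ i, (ν (D i))⁻¹ * (∫⁻ y in D i, f y ∂ν) < ⊤ := by
      intro i
      rcases eq_or_ne (ν (D i)) 0 with h0 | h0
      · rw [setLIntegral_measure_zero _ _ h0, mul_zero]
        exact ENNReal.zero_lt_top
      rcases eq_or_ne (ν (D i)) ⊤ with htop | htop
      · rw [htop, ENNReal.inv_top, zero_mul]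
        exact ENNReal.zero_lt_top
      · have hfi : ∫⁻ y in D i, f y ∂ν < ⊤ := by
          have hcs := cauchy_schwarz (ν.restrict (D i)) f (fun _ => 1) hf measurable_const
          simp only [mul_one, one_pow] at hcs
          refine lt_of_le_of_lt hcs ?_
          apply ENNReal.mul_lt_top
          · refine ENNReal.rpow_lt_top_of_nonneg (by norm_num) ?_
            exact ((setLIntegral_le_lintegral _ _).trans_lt (lt_top_iff_ne_top.mpr hf2)).ne
          · refine ENNReal.rpow_lt_top_of_nonneg (by norm_num) ?_
            rw [lintegral_one, Measure.restrict_apply_univ]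
            exact htop
        exact ENNReal.mul_lt_top (ENNReal.inv_lt_top.mpr (pos_iff_ne_zero.mpr h0)) hfi
    have hMK : ∀ x, M x ≤ K := by
      intro x
      refine iSup_le fun i => iSup_le fun hi => ?_
      exact Finset.single_le_sum (f := fun i => (ν (D i))⁻¹ * ∫⁻ y in D i, f y ∂ν)
        (fun _ _ => zero_le) (Finset.mem_range.mpr hi.1)
    have hKfin : K < ⊤ := ENNReal.sum_lt_top.mpr fun i _ => hci i
    have hle : ∫⁻ x, M x ^ 2 ∂ρ ≤ K ^ 2 * ρ Set.univ := by
      calc ∫⁻ x, M x ^ 2 ∂ρ ≤ ∫⁻ _, K ^ 2 ∂ρ :=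
            lintegral_mono fun x => pow_le_pow_left' (hMK x) 2
        _ = K ^ 2 * ρ Set.univ := lintegral_const _
    refine (hle.trans_lt ?_).ne
    apply ENNReal.mul_lt_top
    · exact ENNReal.pow_lt_top hKfin
    · rw [Measure.restrict_apply_univ]
      exact hΩfin
  have hcs := cauchy_schwarz ρ f M hf hMmeas
  have h4 : ∫⁻ x, M x ^ 2 ∂ρ ≤ 4 * ∫⁻ x, f x ^ 2 ∂ρ := by
    refine le_four_mul hAfin (key.trans ?_)
    exact mul_le_mul_right hcs 2
  rw [hint_eq]
  refine h4.trans (mul_le_mul_right (setLIntegral_le_lintegral _ _) 4)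

lemma maximal_L2 (D : ℕ → Set E) (hDmeas : ∀ i, MeasurableSet (D i))
    (hDnested : ∀ i j, D i ⊆ D j ∨ D j ⊆ D i ∨ Disjoint (D i) (D j))
    (ν : Measure E) (f : E → ℝ≥0∞) (hf : Measurable f) :
    ∫⁻ x, dyadicMaximal D ν f x ^ 2 ∂ν ≤ 4 * ∫⁻ x, f x ^ 2 ∂ν := by
  have hmono : ∀ x, Monotone fun n => truncMax D ν f n x :=
    fun x n m h => truncMax_mono D ν f h x
  have heq : ∀ x, dyadicMaximal D ν f x ^ 2 = ⨆ n, truncMax D ν f n x ^ 2 := by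
    intro x
    rw [← iSup_truncMax D ν f x]
    apply le_antisymm
    · rw [pow_two, ENNReal.iSup_mul]
      refine iSup_le fun n => ?_
      rw [ENNReal.mul_iSup]
      refine iSup_le fun m => ?_
      refine le_trans ?_ (le_iSup (fun n => truncMax D ν f n x ^ 2) (max n m))
      rw [pow_two]
      exact mul_le_mul' (hmono x (le_max_left n m)) (hmono x (le_max_right n m))
    · exact iSup_le fun n => pow_le_pow_left' (le_iSup (fun n => truncMax D ν f n x) n) 2
  calc ∫⁻ x, dyadicMaximal D ν f x ^ 2 ∂ν
      = ∫⁻ x, ⨆ n, truncMax D ν f n x ^ 2 ∂ν := lintegral_congr heq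
    _ = ⨆ n, ∫⁻ x, truncMax D ν f n x ^ 2 ∂ν :=
        lintegral_iSup (fun n => (measurable_truncMax D hDmeas ν f n).pow_const 2)
          (fun n m h x => pow_le_pow_left' (hmono x h) 2)
    _ ≤ 4 * ∫⁻ x, f x ^ 2 ∂ν := iSup_le fun n => trunc_L2 D hDmeas hDnested ν f hf n

end Stmt16

/-- (i) For any measure `ν`, the dyadic maximal operator is bounded
on `L₂(ν)` with norm at most `2` (squared form: constant `4`). (ii) Consequently, the
iterated operator `f ↦ M^{w dμ}(M^{w⁻¹ dμ}(f·w)·w⁻¹)` is bounded on `L₂(w dμ)` with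
norm at most `4`, so any operator `N` with the pointwise bound
`N f ≤ [w]_{A₂} · M^{w dμ}(M^{w⁻¹ dμ}(f w) w⁻¹)` has `‖N‖_{L₂(wdμ)→L₂(wdμ)} ≤ 4 [w]_{A₂}`
(squared form: constant `16 [w]²`). -/
theorem statement16 {E : Type} [MeasurableSpace E]
    (D : ℕ → Set E) (hDmeas : ∀ i, MeasurableSet (D i))
    (hDnested : ∀ i j, D i ⊆ D j ∨ D j ⊆ D i ∨ Disjoint (D i) (D j)) :
    (∀ (ν : Measure E) (f : E → ℝ≥0∞), Measurable f →
      ∫⁻ x, (dyadicMaximal D ν f x) ^ 2 ∂ν ≤ 4 * ∫⁻ x, (f x) ^ 2 ∂ν) ∧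
    (∀ (μ : Measure E) (w : E → ℝ≥0∞), Measurable w → (∀ x, 0 < w x ∧ w x < ⊤) →
      ∀ (W : ℝ≥0∞) (f : E → ℝ≥0∞), Measurable f →
      ∀ Nf : E → ℝ≥0∞,
        (∀ x, Nf x ≤ W * dyadicMaximal D (μ.withDensity w)
            (fun y => dyadicMaximal D (μ.withDensity fun z => (w z)⁻¹)
              (fun z => f z * w z) y * (w y)⁻¹) x) →
        ∫⁻ x, (Nf x) ^ 2 * w x ∂μ ≤ 16 * W ^ 2 * ∫⁻ x, (f x) ^ 2 * w x ∂μ) := by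
  constructor
  · exact fun ν f hf => Stmt16.maximal_L2 D hDmeas hDnested ν f hf
  · intro μ w hw hwpos W f hf Nf hNf
    set ν₁ := μ.withDensity w with hν₁
    set ν₂ := μ.withDensity (fun z => (w z)⁻¹) with hν₂
    set h : E → ℝ≥0∞ := fun z => f z * w z with hh'
    have hhm : Measurable h := hf.mul hw
    set M₂ : E → ℝ≥0∞ := dyadicMaximal D ν₂ h with hM₂
    have hM₂m : Measurable M₂ := Stmt16.measurable_dyadicMaximal D hDmeas ν₂ h
    set g : E → ℝ≥0∞ := fun y => M₂ y * (w y)⁻¹ with hg'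
    have hgm : Measurable g := hM₂m.mul hw.inv
    set M₁ : E → ℝ≥0∞ := dyadicMaximal D ν₁ g with hM₁
    have hM₁m : Measurable M₁ := Stmt16.measurable_dyadicMaximal D hDmeas ν₁ g
    have hw0 : ∀ x, w x ≠ 0 := fun x => (hwpos x).1.ne'
    have hwt : ∀ x, w x ≠ ⊤ := fun x => (hwpos x).2.ne
    calc ∫⁻ x, Nf x ^ 2 * w x ∂μ
        ≤ ∫⁻ x, (W * M₁ x) ^ 2 * w x ∂μ :=
          lintegral_mono fun x => mul_le_mul_left (pow_le_pow_left' (hNf x) 2) _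
      _ = ∫⁻ x, W ^ 2 * (M₁ x ^ 2 * w x) ∂μ := by
          refine lintegral_congr fun x => ?_
          ring
      _ = W ^ 2 * ∫⁻ x, M₁ x ^ 2 * w x ∂μ :=
          lintegral_const_mul _ ((hM₁m.pow_const 2).mul hw)
      _ = W ^ 2 * ∫⁻ x, M₁ x ^ 2 ∂ν₁ := by
          rw [hν₁, lintegral_withDensity_eq_lintegral_mul μ hw (hM₁m.pow_const 2)]
          congr 1
          exact lintegral_congr fun x => mul_comm _ _
      _ ≤ W ^ 2 * (4 * ∫⁻ x, g x ^ 2 ∂ν₁) :=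
          mul_le_mul_right (Stmt16.maximal_L2 D hDmeas hDnested ν₁ g hgm) _
      _ = 4 * W ^ 2 * ∫⁻ x, g x ^ 2 ∂ν₁ := by ring
      _ = 4 * W ^ 2 * ∫⁻ x, M₂ x ^ 2 * (w x)⁻¹ ∂μ := by
          congr 1
          rw [hν₁, lintegral_withDensity_eq_lintegral_mul μ hw (hgm.pow_const 2)]
          refine lintegral_congr fun x => ?_
          show w x * (M₂ x * (w x)⁻¹) ^ 2 = M₂ x ^ 2 * (w x)⁻¹
          rw [mul_pow, pow_two ((w x)⁻¹)]
          calc w x * (M₂ x ^ 2 * ((w x)⁻¹ * (w x)⁻¹))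
              = M₂ x ^ 2 * (w x * (w x)⁻¹ * (w x)⁻¹) := by ring
            _ = M₂ x ^ 2 * (w x)⁻¹ := by
                rw [ENNReal.mul_inv_cancel (hw0 x) (hwt x), one_mul]
      _ = 4 * W ^ 2 * ∫⁻ x, M₂ x ^ 2 ∂ν₂ := by
          congr 1
          rw [hν₂, lintegral_withDensity_eq_lintegral_mul μ (f := fun z => (w z)⁻¹) hw.inv (hM₂m.pow_const 2)]
          exact lintegral_congr fun x => mul_comm _ _
      _ ≤ 4 * W ^ 2 * (4 * ∫⁻ x, h x ^ 2 ∂ν₂) :=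
          mul_le_mul_right (Stmt16.maximal_L2 D hDmeas hDnested ν₂ h hhm) _
      _ = 16 * W ^ 2 * ∫⁻ x, h x ^ 2 ∂ν₂ := by ring
      _ = 16 * W ^ 2 * ∫⁻ x, f x ^ 2 * w x ∂μ := by
          congr 1
          rw [hν₂, lintegral_withDensity_eq_lintegral_mul μ (f := fun z => (w z)⁻¹) hw.inv (hhm.pow_const 2)]
          refine lintegral_congr fun x => ?_
          show (w x)⁻¹ * (f x * w x) ^ 2 = f x ^ 2 * w x
          rw [mul_pow, pow_two (w x)]
          calc (w x)⁻¹ * (f x ^ 2 * (w x * w x))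
              = f x ^ 2 * ((w x)⁻¹ * w x * w x) := by ring
            _ = f x ^ 2 * w x := by
                rw [ENNReal.inv_mul_cancel (hw0 x) (hwt x), one_mul]
end
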